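/- arXiv:2009.04670 — 5 statements merged into one kernel-verified Lean document; each statement's English description precedes it below -/
import Mathlib

section
/- Let $n \ge 1$ and let $p_1,\dots,p_n$ and $q_1,\dots,q_n$ be elements of a commutative ring. Then the determinant of the $n\times n$ matrix with $(j,\ell)$ entry $p_{\min(j,\ell)}\, q_{\max(j,\ell)}$ equals $p_1 q_n \prod_{j=1}^{n-1} (p_{j+1} q_j - p_j q_{j+1})$. -/
open Matrix Finset

private def kerMat (R : Type*) [CommRing R] (n : ℕ) (p q : ℕ → R) :
    Matrix (Fin n) (Fin n) R :=
  Matrix.of fun j ℓ : Fin n => p (min (j : ℕ) (ℓ : ℕ) + 1) * q (max (j : ℕ) (ℓ : ℕ) + 1)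

private lemma kerStep {R : Type*} [CommRing R] (m : ℕ) (p q : ℕ → R) :
    q (m + 1) * (kerMat R (m + 2) p q).det
      = q (m + 2) * (p (m + 2) * q (m + 1) - p (m + 1) * q (m + 2))
        * (kerMat R (m + 1) p q).det := by
  set A := kerMat R (m + 2) p q with hA
  set i : Fin (m + 2) := Fin.last (m + 1) with hi
  set jp : Fin (m + 2) := (Fin.last m).castSucc with hjp
  have hij : jp ≠ i := by
    simp [hi, hjp, Fin.ext_iff]
  set C := A.updateCol i (fun r => q (m + 1) * A r i - q (m + 2) * A r jp) with hC
  have h1 : C.det = q (m + 1) * A.det := by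
    have hfun : (fun r => q (m + 1) * A r i - q (m + 2) * A r jp)
        = (q (m + 1) • fun r => A r i) + ((-(q (m + 2))) • fun r => A r jp) := by
      funext r; simp [smul_eq_mul]; ring
    rw [hC, hfun, det_updateCol_add, det_updateCol_smul, det_updateCol_smul,
      updateCol_eq_self, det_updateCol_eq_zero hij]
    ring
  have hzero : ∀ r : Fin (m + 2), r ≠ i → C r i = 0 := by
    intro r hr
    have hr' : (r : ℕ) ≤ m := by
      have h1 := r.isLt
      have h2 : (r : ℕ) ≠ m + 1 := fun h => hr (Fin.ext (by simp [hi, h]))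
      omega
    rw [hC, updateCol_self]
    have h1 : A r i = p ((r : ℕ) + 1) * q (m + 2) := by
      simp [hA, kerMat, hi]
      rw [min_eq_left (by omega), max_eq_right (by omega)]
    have h2 : A r jp = p ((r : ℕ) + 1) * q (m + 1) := by
      simp [hA, kerMat, hjp]
      rw [min_eq_left (by omega), max_eq_right (by omega)]
    rw [h1, h2]; ring
  have hcorner : C i i = q (m + 2) * (p (m + 2) * q (m + 1) - p (m + 1) * q (m + 2)) := by
    rw [hC, updateCol_self]
    have h1 : A i i = p (m + 2) * q (m + 2) := by simp [hA, kerMat, hi]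
    have h2 : A i jp = p (m + 1) * q (m + 2) := by
      simp only [hA, kerMat, hi, hjp, Matrix.of_apply, Fin.val_last, Fin.coe_castSucc]
      rw [min_eq_right (by omega), max_eq_left (by omega)]
    rw [h1, h2]; ring
  have hminor : C.submatrix i.succAbove i.succAbove = kerMat R (m + 1) p q := by
    ext r c
    have hsa : i.succAbove = Fin.castSucc := by
      rw [hi]; exact Fin.succAbove_last
    have hne : (Fin.castSucc c : Fin (m + 2)) ≠ i := by
      simp [hi, Fin.ext_iff]; omega
    simp only [submatrix_apply, hsa, hC]
    rw [updateCol_ne hne]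
    simp [hA, kerMat]
  have h2' : C.det = q (m + 2) * (p (m + 2) * q (m + 1) - p (m + 1) * q (m + 2))
      * (kerMat R (m + 1) p q).det := by
    rw [det_succ_column C i]
    rw [Finset.sum_eq_single i]
    · rw [hcorner, hminor]
      have : ((i : ℕ) + (i : ℕ)) = 2 * (m + 1) := by simp [hi]; ring
      rw [this, pow_mul]
      norm_num
    · intro r _ hr
      rw [hzero r hr]; ring
    · intro h; exact absurd (Finset.mem_univ i) h
  rw [← h1, h2']

private lemma kerKey (m : ℕ) :
    (kerMat (MvPolynomial (ℕ ⊕ ℕ) ℤ) (m + 1)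
        (fun i => MvPolynomial.X (Sum.inl i)) (fun i => MvPolynomial.X (Sum.inr i))).det
      = MvPolynomial.X (Sum.inl 1) * MvPolynomial.X (Sum.inr (m + 1)) *
        ∏ j ∈ Finset.range m,
          (MvPolynomial.X (Sum.inl (j + 2)) * MvPolynomial.X (Sum.inr (j + 1))
            - MvPolynomial.X (Sum.inl (j + 1)) * MvPolynomial.X (Sum.inr (j + 2))) := by
  induction m with
  | zero => simp [kerMat, Matrix.det_fin_one]
  | succ m ih =>
    have hq : (MvPolynomial.X (Sum.inr (m + 1)) : MvPolynomial (ℕ ⊕ ℕ) ℤ) ≠ 0 :=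
      MvPolynomial.X_ne_zero _
    apply mul_left_cancel₀ hq
    show MvPolynomial.X (Sum.inr (m + 1)) * (kerMat (MvPolynomial (ℕ ⊕ ℕ) ℤ) (m + 2)
        (fun i => MvPolynomial.X (Sum.inl i)) (fun i => MvPolynomial.X (Sum.inr i))).det = _
    rw [kerStep m (fun i => MvPolynomial.X (Sum.inl i)) (fun i => MvPolynomial.X (Sum.inr i)),
      ih, Finset.prod_range_succ]
    ring

/-- For `p, q` (1-based) in a commutative ring, the determinant of the
`n × n` matrix with `(j, ℓ)` entry `p (min j ℓ) * q (max j ℓ)` equals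
`p 1 * q n * ∏_{j=1}^{n-1} (p (j+1) * q j - p j * q (j+1))`. -/
theorem det_min_max_kernel {R : Type*} [CommRing R] (n : ℕ) (hn : 1 ≤ n)
    (p q : ℕ → R) :
    Matrix.det (Matrix.of fun j ℓ : Fin n =>
        p (min (j : ℕ) (ℓ : ℕ) + 1) * q (max (j : ℕ) (ℓ : ℕ) + 1)) =
      p 1 * q n * ∏ j ∈ Finset.range (n - 1),
        (p (j + 2) * q (j + 1) - p (j + 1) * q (j + 2)) := by
  obtain ⟨m, rfl⟩ : ∃ m, n = m + 1 := ⟨n - 1, by omega⟩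
  set φ : MvPolynomial (ℕ ⊕ ℕ) ℤ →+* R :=
    (MvPolynomial.eval₂Hom (Int.castRingHom R) (Sum.elim p q)) with hφ
  have hmap : (kerMat (MvPolynomial (ℕ ⊕ ℕ) ℤ) (m + 1)
      (fun i => MvPolynomial.X (Sum.inl i)) (fun i => MvPolynomial.X (Sum.inr i))).map φ
      = kerMat R (m + 1) p q := by
    ext r c
    simp [kerMat, hφ]
  have := congrArg φ (kerKey m)
  rw [RingHom.map_det, RingHom.mapMatrix_apply, hmap] at this
  have hrhs : φ (MvPolynomial.X (Sum.inl 1) * MvPolynomial.X (Sum.inr (m + 1)) *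
      ∏ j ∈ Finset.range m,
        (MvPolynomial.X (Sum.inl (j + 2)) * MvPolynomial.X (Sum.inr (j + 1))
          - MvPolynomial.X (Sum.inl (j + 1)) * MvPolynomial.X (Sum.inr (j + 2))))
      = p 1 * q (m + 1) * ∏ j ∈ Finset.range m,
          (p (j + 2) * q (j + 1) - p (j + 1) * q (j + 2)) := by
    rw [_root_.map_mul, _root_.map_mul, map_prod]
    simp [hφ]
  rw [hrhs] at this
  simpa [kerMat] using this
end

section
/- Let $a_j, b_j, c_j, d_j \in \mathbb{C}$ for $1 \le j \le k$, and suppose that $\operatorname{Im}(c_j/d_j) > 0$ for all $j$. Let $q$ be a standard Cauchy random variable (density $1/(\pi(1+x^2))$ on $\mathbb{R}$). Then $E \prod_{j=1}^k \frac{a_j + q b_j}{c_j + q d_j} = \prod_{j=1}^k \frac{a_j + i b_j}{c_j + i d_j}$, i.e. $\int_{-\infty}^{\infty} \frac{1}{\pi(1+x^2)} \prod_{j=1}^k \frac{a_j + x b_j}{c_j + x d_j}\, dx = \prod_{j=1}^k \frac{a_j + i b_j}{c_j + i d_j}$. -/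
open scoped Real
open MeasureTheory Complex

/-- Denominator of each transplanted factor is nonzero on the closed unit disk. -/
private lemma cauchy_avg_den_ne_zero {c d : ℂ} (h : 0 < (c / d).im) {z : ℂ}
    (hz : ‖z‖ ≤ 1) : c * (1 - z) + I * (1 + z) * d ≠ 0 := by
  have hd : d ≠ 0 := by
    intro hd; rw [hd, div_zero] at h; simp at h
  have hN : 0 < Complex.normSq d := Complex.normSq_pos.2 hd
  have him : 0 < c.im * d.re - c.re * d.im := by
    have h' := h
    rw [Complex.div_im, div_sub_div_same, lt_div_iff₀ hN] at h'
    simpa using h'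
  intro heq
  have hz2 : z * (c - I * d) = c + I * d := by linear_combination -heq
  have habs : ‖c + I * d‖ ≤ ‖c - I * d‖ := by
    rw [← hz2, norm_mul]
    calc ‖z‖ * ‖c - I * d‖
        ≤ 1 * ‖c - I * d‖ := by gcongr
      _ = _ := one_mul _
  have h1 : Complex.normSq (c + I * d) ≤ Complex.normSq (c - I * d) := by
    rw [← Complex.sq_norm, ← Complex.sq_norm]
    have := norm_nonneg (c + I * d)
    nlinarith
  rw [Complex.normSq_apply, Complex.normSq_apply] at h1
  simp only [Complex.add_re, Complex.add_im, Complex.sub_re, Complex.sub_im,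
    Complex.mul_re, Complex.mul_im, Complex.I_re, Complex.I_im] at h1
  nlinarith

/-- Key trigonometric identities for the point `exp ((π + 2 arctan x) i)` on the circle. -/
private lemma cauchy_avg_exp_point (x : ℝ) :
    I * (1 + Complex.exp ((π + 2 * Real.arctan x : ℝ) * I)) =
      (x : ℂ) * (1 - Complex.exp ((π + 2 * Real.arctan x : ℝ) * I)) ∧
    (1 : ℂ) - Complex.exp ((π + 2 * Real.arctan x : ℝ) * I) ≠ 0 := by
  set φ := Real.arctan x with hφ
  have hc : 0 < Real.cos φ := Real.cos_arctan_pos x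
  have hs : Real.sin φ = x * Real.cos φ := by
    have := Real.tan_arctan x
    rw [Real.tan_eq_sin_div_cos] at this
    field_simp at this
    linarith [this]
  have hpyth := Real.sin_sq_add_cos_sq φ
  have hA : Real.cos (π + 2 * φ) = 1 - 2 * (Real.cos φ) ^ 2 := by
    rw [Real.cos_add, Real.cos_two_mul]
    simp
  have hB : Real.sin (π + 2 * φ) = -(2 * Real.sin φ * Real.cos φ) := by
    rw [Real.sin_add, Real.sin_two_mul]
    simp
  have hz : Complex.exp ((π + 2 * φ : ℝ) * I) =
      Complex.ofReal (Real.cos (π + 2 * φ)) + Complex.ofReal (Real.sin (π + 2 * φ)) * I := by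
    rw [Complex.exp_mul_I, Complex.ofReal_cos, Complex.ofReal_sin]
  rw [hz, hA, hB]
  constructor
  · simp only [Complex.ext_iff, Complex.mul_re, Complex.mul_im, Complex.add_re, Complex.add_im,
      Complex.sub_re, Complex.sub_im, Complex.one_re, Complex.one_im, Complex.I_re, Complex.I_im,
      Complex.ofReal_re, Complex.ofReal_im, Complex.ofReal_mul]
    push_cast
    constructor
    · linear_combination (2 * Real.cos φ) * hs
    · linear_combination (-2 : ℝ) * hpyth + (2 * Real.sin φ) * hs
  · intro hcon
    have := congrArg Complex.re hcon
    simp only [Complex.sub_re, Complex.add_re, Complex.mul_re, Complex.one_re,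
      Complex.ofReal_re, Complex.ofReal_im, Complex.I_re, Complex.I_im,
      Complex.zero_re] at this
    nlinarith

/-- Averaging a rational product against the standard Cauchy density:
if `Im (c j / d j) > 0` for all `j`, then
`∫_ℝ (π (1+x²))⁻¹ ∏_j (a j + x b j)/(c j + x d j) dx = ∏_j (a j + i b j)/(c j + i d j)`. -/
theorem cauchy_average_prod (k : ℕ) (a b c d : Fin k → ℂ)
    (h : ∀ j, 0 < (c j / d j).im) :
    ∫ x : ℝ,
        (1 / ((π : ℂ) * (1 + (x : ℂ) ^ 2))) *
          ∏ j, (a j + (x : ℂ) * b j) / (c j + (x : ℂ) * d j) =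
      ∏ j, (a j + Complex.I * b j) / (c j + Complex.I * d j) := by
  classical
  set G : ℂ → ℂ :=
    fun z => ∏ j, (a j * (1 - z) + I * (1 + z) * b j) / (c j * (1 - z) + I * (1 + z) * d j)
    with hGdef
  -- value at the center
  have hG0 : G 0 = ∏ j, (a j + Complex.I * b j) / (c j + Complex.I * d j) := by
    simp [hGdef]
  -- differentiability on the closed disk
  have hdiff : DifferentiableOn ℂ G (Metric.closedBall 0 1) := by
    intro z hz
    have hz' : ‖z‖ ≤ 1 := by
      simpa [Complex.dist_eq] using Metric.mem_closedBall.1 hz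
    apply DifferentiableAt.differentiableWithinAt
    apply DifferentiableAt.fun_finsetProd
    intro j _
    exact DifferentiableAt.div (by fun_prop) (by fun_prop)
      (cauchy_avg_den_ne_zero (h j) hz')
  have hdc : DiffContOnCl ℂ G (Metric.ball 0 1) :=
    DifferentiableOn.diffContOnCl (by rwa [closure_ball (0 : ℂ) one_ne_zero])
  -- Cauchy integral formula
  have hcauchy : (∮ z in C(0, 1), (z - 0)⁻¹ • G z) = (2 * π * I : ℂ) • G 0 :=
    hdc.circleIntegral_sub_inv_smul (by simp)
  -- rewrite the circle integral as an interval integral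
  have hcirc : (∮ z in C(0, 1), (z - 0)⁻¹ • G z)
      = ∫ θ in (0:ℝ)..(2 * π), I * G (Complex.exp ((θ : ℂ) * I)) := by
    simp only [circleIntegral, deriv_circleMap, circleMap, Complex.ofReal_one, zero_add, one_mul,
      sub_zero, smul_eq_mul]
    refine intervalIntegral.integral_congr fun θ _ => ?_
    have hne : Complex.exp ((θ : ℂ) * I) ≠ 0 := Complex.exp_ne_zero _
    field_simp
  have hJ : (∫ θ in (0:ℝ)..(2 * π), G (Complex.exp ((θ : ℂ) * I)))
      = 2 * π * G 0 := by
    have h1 : (∫ θ in (0:ℝ)..(2 * π), I * G (Complex.exp ((θ : ℂ) * I)))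
        = I * ∫ θ in (0:ℝ)..(2 * π), G (Complex.exp ((θ : ℂ) * I)) :=
      intervalIntegral.integral_const_mul _ _
    have h2 : I * (∫ θ in (0:ℝ)..(2 * π), G (Complex.exp ((θ : ℂ) * I)))
        = I * (2 * π * G 0) := by
      rw [← h1, ← hcirc, hcauchy, smul_eq_mul]; ring
    exact mul_left_cancel₀ Complex.I_ne_zero h2
  -- change of variables θ = π + 2 arctan x
  set f : ℝ → ℝ := fun x => π + 2 * Real.arctan x with hf
  set g : ℝ → ℂ := fun θ => G (Complex.exp ((θ : ℂ) * I)) with hg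
  have himg : f '' Set.univ = Set.Ioo 0 (2 * π) := by
    rw [Set.image_univ]
    ext y
    simp only [Set.mem_range, Set.mem_Ioo, hf]
    constructor
    · rintro ⟨x, rfl⟩
      have h1 := Real.arctan_lt_pi_div_two x
      have h2 := Real.neg_pi_div_two_lt_arctan x
      constructor <;> linarith
    · rintro ⟨h1, h2⟩
      exact ⟨Real.tan ((y - π) / 2),
        by rw [Real.arctan_tan (by linarith) (by linarith)]; ring⟩
  have hderiv : ∀ x ∈ (Set.univ : Set ℝ),
      HasDerivWithinAt f (2 / (1 + x ^ 2)) Set.univ x := by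
    intro x _
    have : HasDerivAt f (2 * (1 / (1 + x ^ 2))) x :=
      ((Real.hasDerivAt_arctan x).const_mul 2).const_add π
    have h2 : 2 * (1 / (1 + x ^ 2)) = 2 / (1 + x ^ 2) := by ring
    exact (h2 ▸ this).hasDerivWithinAt
  have hinj : Set.InjOn f Set.univ := fun x _ y _ hxy => by
    refine Real.arctan_injective ?_
    simp only [hf] at hxy
    linarith
  have hcov : (∫ θ in Set.Ioo 0 (2 * π), g θ)
      = ∫ x : ℝ, |2 / (1 + x ^ 2)| • g (f x) := by
    rw [← himg, MeasureTheory.integral_image_eq_integral_abs_deriv_smul MeasurableSet.univ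
      hderiv hinj g]
    simp [Measure.restrict_univ]
  -- identify g (f x) with the original integrand product
  have hgf : ∀ x : ℝ, g (f x) = ∏ j, (a j + (x : ℂ) * b j) / (c j + (x : ℂ) * d j) := by
    intro x
    obtain ⟨hz2, hz1⟩ := cauchy_avg_exp_point x
    set z := Complex.exp ((π + 2 * Real.arctan x : ℝ) * I) with hzdef
    have : g (f x) = ∏ j, (a j * (1 - z) + I * (1 + z) * b j)
        / (c j * (1 - z) + I * (1 + z) * d j) := by
      simp only [hg, hf, hGdef, hzdef]
    rw [this]
    refine Finset.prod_congr rfl fun j _ => ?_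
    have hnum : a j * (1 - z) + I * (1 + z) * b j = (1 - z) * (a j + (x : ℂ) * b j) := by
      linear_combination (b j) * hz2
    have hden : c j * (1 - z) + I * (1 + z) * d j = (1 - z) * (c j + (x : ℂ) * d j) := by
      linear_combination (d j) * hz2
    rw [hnum, hden, mul_div_mul_left _ _ hz1]
  -- assemble everything
  have hIoo : (∫ θ in (0:ℝ)..(2 * π), g θ) = ∫ θ in Set.Ioo 0 (2 * π), g θ := by
    rw [intervalIntegral.integral_of_le (by positivity), MeasureTheory.integral_Ioc_eq_integral_Ioo]
  have hfinal : (∫ x : ℝ, |2 / (1 + x ^ 2)| • g (f x)) = 2 * π * G 0 := by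
    rw [← hcov, ← hIoo]
    exact hJ
  have hlhs : (∫ x : ℝ,
        (1 / ((π : ℂ) * (1 + (x : ℂ) ^ 2))) *
          ∏ j, (a j + (x : ℂ) * b j) / (c j + (x : ℂ) * d j))
      = (2 * π : ℂ)⁻¹ * ∫ x : ℝ, |2 / (1 + x ^ 2)| • g (f x) := by
    rw [← MeasureTheory.integral_const_mul]
    refine MeasureTheory.integral_congr_ae (Filter.Eventually.of_forall fun x => ?_)
    dsimp only
    rw [hgf x]
    have habs : |2 / (1 + x ^ 2)| = 2 / (1 + x ^ 2) := abs_of_pos (by positivity)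
    rw [habs, Complex.real_smul]
    have hne : ((1 : ℂ) + (x : ℂ) ^ 2) ≠ 0 := by
      have : ((1 + x ^ 2 : ℝ) : ℂ) ≠ 0 := by
        rw [Complex.ofReal_ne_zero]; positivity
      push_cast at this
      exact this
    have hπ : (π : ℂ) ≠ 0 := by
      rw [Complex.ofReal_ne_zero]; exact Real.pi_ne_zero
    have hsc : ((2 * (π : ℂ))⁻¹) * (2 / (1 + (x : ℂ) ^ 2)) = 1 / ((π : ℂ) * (1 + (x : ℂ) ^ 2)) := by
      field_simp
    push_cast
    rw [← mul_assoc, hsc]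
  rw [hlhs, hfinal, ← hG0]
  have hπ : (π : ℂ) ≠ 0 := by
    rw [Complex.ofReal_ne_zero]; exact Real.pi_ne_zero
  field_simp
end

section
/- Fix $\alpha > 0$, $\sigma > 0$ and $n \ge 1$. Then the iterated integral $\int\cdots\int_{0 < s_1 < \cdots < s_{2n} \le \sigma} \frac{s_1^{\alpha} s_3^{\alpha} \cdots s_{2n-1}^{\alpha}}{s_2^{\alpha} s_4^{\alpha} \cdots s_{2n}^{\alpha}}\, ds_1 \cdots ds_{2n} = \frac{\sigma^{2n}\, \Gamma(\frac{\alpha+1}{2})}{4^n\, n!\, \Gamma(\frac{\alpha+1}{2} + n)}$. -/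
open MeasureTheory Set


def simplexSet (m : ℕ) (σ : ℝ) : Set (Fin m → ℝ) :=
  {t | StrictMono t ∧ ∀ i, t i ∈ Set.Ioc 0 σ}

lemma measurableSet_simplexSet (m : ℕ) (σ : ℝ) : MeasurableSet (simplexSet m σ) := by
  have h1 : MeasurableSet {t : Fin m → ℝ | StrictMono t} := by
    have : {t : Fin m → ℝ | StrictMono t} =
        ⋂ (i : Fin m) (j : Fin m) (_ : i < j), {t | t i < t j} := by
      ext t
      simp only [Set.mem_setOf_eq, Set.mem_iInter]
      exact ⟨fun h i j hij => h hij, fun h a b hab => h a b hab⟩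
    rw [this]
    exact MeasurableSet.iInter fun i => MeasurableSet.iInter fun j =>
      MeasurableSet.iInter fun _ =>
        measurableSet_lt (measurable_pi_apply i) (measurable_pi_apply j)
  have h2 : MeasurableSet {t : Fin m → ℝ | ∀ i, t i ∈ Set.Ioc 0 σ} := by
    have : {t : Fin m → ℝ | ∀ i, t i ∈ Set.Ioc 0 σ} =
        ⋂ (i : Fin m), (fun t : Fin m → ℝ => t i) ⁻¹' Set.Ioc 0 σ := by
      ext t; simp
    rw [this]
    exact MeasurableSet.iInter fun i => (measurable_pi_apply i) measurableSet_Ioc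
  exact h1.inter h2

noncomputable def EE (ε : ℕ → ℝ) (k : ℕ) : ℝ := (∑ i ∈ Finset.range (k + 1), ε i) + k + 1

lemma EE_shift (ε : ℕ → ℝ) (k : ℕ) :
    EE (fun j => if j = 0 then ε 0 + ε 1 + 1 else ε (j + 1)) k = EE ε (k + 1) := by
  unfold EE
  rw [Finset.sum_range_succ' _ k, Finset.sum_range_succ' (fun i => ε i) (k + 1),
    Finset.sum_range_succ' (fun i => ε (i + 1)) k]
  simp only [if_neg (Nat.succ_ne_zero _), if_pos rfl]
  push_cast
  ring

lemma cons_mem_simplexSet_iff {m : ℕ} {σ : ℝ} (x : ℝ) (y : Fin (m + 1) → ℝ) :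
    Fin.cons x y ∈ simplexSet (m + 2) σ ↔ y ∈ simplexSet (m + 1) σ ∧ x ∈ Set.Ioo 0 (y 0) := by
  constructor
  · rintro ⟨hsm, hmem⟩
    have hy : StrictMono y := by
      have h : StrictMono (Fin.cons x y ∘ Fin.succ) := hsm.comp Fin.strictMono_succ
      have : y = Fin.cons x y ∘ Fin.succ := by
        funext i; simp [Function.comp, Fin.cons_succ]
      rw [this]; exact h
    have hx0 : 0 < x := by
      have := hmem 0
      simpa only [Fin.cons_zero] using this.1
    have hxy : x < y 0 := by
      have h01 : (0 : Fin (m + 2)) < 1 := Fin.zero_lt_one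
      have := hsm h01
      rw [← Fin.succ_zero_eq_one, Fin.cons_zero, Fin.cons_succ] at this
      exact this
    exact ⟨⟨hy, fun i => by simpa only [Fin.cons_succ] using hmem i.succ⟩, hx0, hxy⟩
  · rintro ⟨⟨hy, hmem⟩, hx0, hxy⟩
    constructor
    · rw [Fin.strictMono_iff_lt_succ]
      intro i
      induction i using Fin.cases with
      | zero =>
        rw [Fin.castSucc_zero, Fin.cons_zero, Fin.cons_succ]
        exact hxy
      | succ j =>
        rw [← Fin.succ_castSucc, Fin.cons_succ, Fin.cons_succ]
        exact hy Fin.castSucc_lt_succ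
    · intro i
      induction i using Fin.cases with
      | zero =>
        refine ⟨by simpa only [Fin.cons_zero] using hx0, ?_⟩
        rw [Fin.cons_zero]
        exact le_trans hxy.le (hmem 0).2
      | succ j => simpa only [Fin.cons_succ] using hmem j

lemma rpow_integral_Ioo {b r : ℝ} (hb : 0 < b) (hr : -1 < r) :
    ∫ x in Set.Ioo 0 b, x ^ r ∂volume = b ^ (r + 1) / (r + 1) := by
  rw [← integral_Ioc_eq_integral_Ioo, ← intervalIntegral.integral_of_le hb.le,
    integral_rpow (Or.inl hr), Real.zero_rpow (by linarith)]
  ring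

lemma rpow_integrableOn_Ioc {b r : ℝ} (hb : 0 < b) (hr : -1 < r) :
    IntegrableOn (fun x : ℝ => x ^ r) (Set.Ioc 0 b) volume := by
  have := intervalIntegral.intervalIntegrable_rpow' (a := 0) (b := b) hr
  rwa [intervalIntegrable_iff_integrableOn_Ioc_of_le hb.le] at this

lemma measurable_rpow_const (r : ℝ) : Measurable fun x : ℝ => x ^ r := by
  have h : (fun x : ℝ => x ^ r) = fun x =>
      if x = 0 then (if r = 0 then 1 else 0)
      else Real.exp (Real.log x * r) * (if x < 0 then Real.cos (r * Real.pi) else 1) := by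
    funext x
    rcases lt_trichotomy x 0 with hx | hx | hx
    · rw [if_neg hx.ne, if_pos hx, Real.rpow_def_of_neg hx]
    · subst hx
      rw [if_pos rfl]
      by_cases hr : r = 0
      · simp [hr]
      · simp [Real.zero_rpow hr, hr]
    · rw [if_neg hx.ne', if_neg (not_lt.2 hx.le), mul_one, Real.rpow_def_of_pos hx]
  rw [h]
  have hs : MeasurableSet {x : ℝ | x = 0} := by
    have : {x : ℝ | x = 0} = {0} := by ext; simp
    rw [this]; exact measurableSet_singleton 0
  refine Measurable.ite hs measurable_const ?_
  exact (Real.measurable_exp.comp (Real.measurable_log.mul_const r)).mul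
    (Measurable.ite (measurableSet_lt measurable_id measurable_const)
      measurable_const measurable_const)

lemma measurable_prodRpow (m : ℕ) (ε : ℕ → ℝ) :
    Measurable (fun s : Fin m → ℝ => ∏ i, s i ^ ε (i : ℕ)) :=
  Finset.measurable_prod _ fun i _ =>
    (measurable_rpow_const (ε (i : ℕ))).comp (measurable_pi_apply i)

set_option maxHeartbeats 2000000 in
lemma step_case (m : ℕ)
    (IH : ∀ (ε : ℕ → ℝ) (σ : ℝ), 0 < σ → (∀ k, k ≤ m → 0 < EE ε k) →
      IntegrableOn (fun s : Fin (m + 1) → ℝ => ∏ i, s i ^ ε (i : ℕ)) (simplexSet (m + 1) σ)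
        volume ∧
      ∫ s in simplexSet (m + 1) σ, (∏ i, s i ^ ε (i : ℕ)) ∂volume
        = σ ^ (EE ε m) / ∏ k ∈ Finset.range (m + 1), EE ε k)
    (ε : ℕ → ℝ) (σ : ℝ) (hσ : 0 < σ) (hE : ∀ k, k ≤ m + 1 → 0 < EE ε k) :
    IntegrableOn (fun s : Fin (m + 2) → ℝ => ∏ i, s i ^ ε (i : ℕ)) (simplexSet (m + 2) σ)
      volume ∧
    ∫ s in simplexSet (m + 2) σ, (∏ i, s i ^ ε (i : ℕ)) ∂volume
      = σ ^ (EE ε (m + 1)) / ∏ k ∈ Finset.range (m + 2), EE ε k := by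
  have hEE0 : EE ε 0 = ε 0 + 1 := by simp [EE]
  have hε0 : -1 < ε 0 := by
    have := hE 0 (by omega); rw [hEE0] at this; linarith
  set ε' : ℕ → ℝ := fun j => if j = 0 then ε 0 + ε 1 + 1 else ε (j + 1) with hε'
  have hEshift : ∀ k, EE ε' k = EE ε (k + 1) := fun k => EE_shift ε k
  have hE' : ∀ k, k ≤ m → 0 < EE ε' k := fun k hk => by
    rw [hEshift]; exact hE (k + 1) (by omega)
  obtain ⟨ihInt, ihVal⟩ := IH ε' σ hσ hE'
  have hS2 : MeasurableSet (simplexSet (m + 2) σ) := measurableSet_simplexSet _ _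
  have hS1 : MeasurableSet (simplexSet (m + 1) σ) := measurableSet_simplexSet _ _
  set g : (Fin (m + 2) → ℝ) → ℝ :=
    (simplexSet (m + 2) σ).indicator (fun s => ∏ i, s i ^ ε (i : ℕ)) with hg
  set F : ℝ × (Fin (m + 1) → ℝ) → ℝ := fun p => g (Fin.cons p.1 p.2) with hF
  have hgm : Measurable g := (measurable_prodRpow _ ε).indicator hS2
  have hFeq : F = g ∘ (MeasurableEquiv.piFinSuccAbove (fun _ : Fin (m + 2) => ℝ) 0).symm := by
    funext p
    simp only [hF, Function.comp_apply, MeasurableEquiv.piFinSuccAbove_symm_apply,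
      Fin.insertNthEquiv_zero, Fin.consEquiv_apply, Fin.insertNth_zero']
    rfl
  have hFm : Measurable F := by
    rw [hFeq]; exact hgm.comp (MeasurableEquiv.measurable _)
  have hcons : ∀ (x : ℝ) (y : Fin (m + 1) → ℝ),
      (∏ i : Fin (m + 2), (Fin.cons x y : Fin (m + 2) → ℝ) i ^ ε (i : ℕ))
        = x ^ ε 0 * ∏ i : Fin (m + 1), y i ^ ε ((i : ℕ) + 1) := by
    intro x y
    rw [Fin.prod_univ_succ]
    simp only [Fin.cons_zero, Fin.cons_succ, Fin.val_succ, Fin.val_zero]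
  have hFy_mem : ∀ y ∈ simplexSet (m + 1) σ, (fun x => F (x, y)) =
      (Set.Ioo 0 (y 0)).indicator
        (fun x => x ^ ε 0 * ∏ i : Fin (m + 1), y i ^ ε ((i : ℕ) + 1)) := by
    intro y hy
    funext x
    by_cases hx : x ∈ Set.Ioo 0 (y 0)
    · rw [Set.indicator_of_mem hx]
      show (simplexSet (m + 2) σ).indicator (fun s => ∏ i, s i ^ ε (i : ℕ)) (Fin.cons x y) = _
      rw [Set.indicator_of_mem ((cons_mem_simplexSet_iff x y).2 ⟨hy, hx⟩), hcons]
    · rw [Set.indicator_of_notMem hx]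
      show (simplexSet (m + 2) σ).indicator (fun s => ∏ i, s i ^ ε (i : ℕ)) (Fin.cons x y) = 0
      exact Set.indicator_of_notMem
        (fun hmem => hx ((cons_mem_simplexSet_iff x y).1 hmem).2) _
  have hFy_notmem : ∀ y ∉ simplexSet (m + 1) σ, (fun x => F (x, y)) = fun _ => (0 : ℝ) := by
    intro y hy; funext x
    show (simplexSet (m + 2) σ).indicator (fun s => ∏ i, s i ^ ε (i : ℕ)) (Fin.cons x y) = 0
    exact Set.indicator_of_notMem
      (fun hmem => hy ((cons_mem_simplexSet_iff x y).1 hmem).1) _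
  have hBint : ∀ y, Integrable (fun x => F (x, y)) volume := by
    intro y
    by_cases hy : y ∈ simplexSet (m + 1) σ
    · rw [hFy_mem y hy, integrable_indicator_iff measurableSet_Ioo]
      have hy0 : 0 < y 0 := (hy.2 0).1
      exact ((rpow_integrableOn_Ioc hy0 hε0).mono_set Set.Ioo_subset_Ioc_self).mul_const _
    · rw [hFy_notmem y hy]; exact integrable_zero _ _ _
  set h : (Fin (m + 1) → ℝ) → ℝ :=
    (simplexSet (m + 1) σ).indicator
      (fun y => (y 0 ^ (ε 0 + 1) / (ε 0 + 1)) * ∏ i : Fin (m + 1), y i ^ ε ((i : ℕ) + 1))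
    with hh
  have hInner : ∀ y, ∫ x, F (x, y) ∂volume = h y := by
    intro y
    by_cases hy : y ∈ simplexSet (m + 1) σ
    · rw [hFy_mem y hy, hh, Set.indicator_of_mem hy, integral_indicator measurableSet_Ioo,
        integral_mul_const, rpow_integral_Ioo (hy.2 0).1 hε0]
    · rw [hFy_notmem y hy, hh, Set.indicator_of_notMem hy]
      simp
  have hFnn : ∀ p, 0 ≤ F p := by
    intro p
    rw [hF, hg]
    exact Set.indicator_nonneg
      (fun s hs => Finset.prod_nonneg fun i _ => Real.rpow_nonneg (le_of_lt (hs.2 i).1) _) _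
  have hprod' : ∀ y ∈ simplexSet (m + 1) σ,
      (y 0 ^ (ε 0 + 1) / (ε 0 + 1)) * ∏ i : Fin (m + 1), y i ^ ε ((i : ℕ) + 1)
        = (ε 0 + 1)⁻¹ * ∏ i : Fin (m + 1), y i ^ ε' (i : ℕ) := by
    intro y hy
    have hy0 : 0 < y 0 := (hy.2 0).1
    rw [Fin.prod_univ_succ, Fin.prod_univ_succ]
    simp only [Fin.val_succ, Fin.val_zero]
    have h1 : (y 0) ^ (ε 0 + 1) * (y 0) ^ ε (0 + 1) = (y 0) ^ (ε' 0) := by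
      rw [← Real.rpow_add hy0]
      have : ε' 0 = ε 0 + ε 1 + 1 := by simp [hε']
      rw [this]
      congr 1
      ring
    have h2 : ∏ i : Fin m, y i.succ ^ ε' ((i : ℕ) + 1)
        = ∏ i : Fin m, y i.succ ^ ε (((i : ℕ) + 1) + 1) := by
      refine Finset.prod_congr rfl fun i _ => ?_
      congr 1
    rw [h2, ← h1]
    field_simp
  have hheq : h = fun y => (ε 0 + 1)⁻¹ •
      (simplexSet (m + 1) σ).indicator (fun y => ∏ i : Fin (m + 1), y i ^ ε' (i : ℕ)) y := by
    funext y
    by_cases hy : y ∈ simplexSet (m + 1) σ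
    · rw [hh, Set.indicator_of_mem hy, Set.indicator_of_mem hy, hprod' y hy, smul_eq_mul]
    · rw [hh, Set.indicator_of_notMem hy, Set.indicator_of_notMem hy, smul_zero]
  have hhint : Integrable h volume := by
    rw [hheq]
    exact (((integrable_indicator_iff hS1).2 ihInt)).smul ((ε 0 + 1)⁻¹)
  have hIntF : Integrable F ((volume : Measure ℝ).prod (volume : Measure (Fin (m + 1) → ℝ))) := by
    refine (integrable_prod_iff' hFm.aestronglyMeasurable).2 ⟨Filter.Eventually.of_forall hBint, ?_⟩
    have : (fun y => ∫ x, ‖F (x, y)‖ ∂volume) = h := by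
      funext y
      have hn : ∀ x, ‖F (x, y)‖ = F (x, y) := fun x => Real.norm_of_nonneg (hFnn _)
      simp_rw [hn]
      exact hInner y
    rwa [this]
  have hmp := (volume_preserving_piFinSuccAbove (fun _ : Fin (m + 2) => ℝ) 0).symm
  have hIntg : Integrable g (volume : Measure (Fin (m + 2) → ℝ)) := by
    have hiff := hmp.integrable_comp_emb
      (MeasurableEquiv.measurableEmbedding
        (MeasurableEquiv.piFinSuccAbove (fun _ : Fin (m + 2) => ℝ) 0).symm) (g := g)
    rw [← hiff, ← hFeq, Measure.volume_eq_prod]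
    exact hIntF
  constructor
  · rw [← integrable_indicator_iff hS2]
    exact hIntg
  · have h1 : ∫ s in simplexSet (m + 2) σ, (∏ i, s i ^ ε (i : ℕ)) ∂volume
        = ∫ t, g t ∂volume := (integral_indicator hS2).symm
    have h2 : ∫ t, g t ∂(volume : Measure (Fin (m + 2) → ℝ))
        = ∫ p, F p ∂(volume : Measure (ℝ × (Fin (m + 1) → ℝ))) := by
      rw [hFeq]
      exact (hmp.integral_comp (MeasurableEquiv.measurableEmbedding _) g).symm
    have h3 : ∫ p, F p ∂(volume : Measure (ℝ × (Fin (m + 1) → ℝ)))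
        = ∫ y, ∫ x, F (x, y) ∂volume ∂volume := by
      rw [Measure.volume_eq_prod]
      exact integral_prod_symm F hIntF
    have h4 : ∫ y, ∫ x, F (x, y) ∂(volume : Measure ℝ)
          ∂(volume : Measure (Fin (m + 1) → ℝ))
        = ∫ y, h y ∂volume := by
      simp_rw [hInner]
    have h5 : ∫ y, h y ∂(volume : Measure (Fin (m + 1) → ℝ))
        = (ε 0 + 1)⁻¹ * ∫ y in simplexSet (m + 1) σ, (∏ i, y i ^ ε' (i : ℕ)) ∂volume := by
      rw [hheq, integral_smul, integral_indicator hS1, smul_eq_mul]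
    rw [h1, h2, h3, h4, h5, ihVal, hEshift m]
    have hprodEE : ∏ k ∈ Finset.range (m + 2), EE ε k
        = (∏ k ∈ Finset.range (m + 1), EE ε' k) * EE ε 0 := by
      rw [Finset.prod_range_succ' (EE ε) (m + 1)]
      congr 1
      exact Finset.prod_congr rfl fun k _ => (hEshift k).symm
    rw [hprodEE, hEE0]
    have hPpos : 0 < ∏ k ∈ Finset.range (m + 1), EE ε' k :=
      Finset.prod_pos fun k hk => hE' k (by simpa using Nat.lt_succ_iff.1 (Finset.mem_range.1 hk))
    rw [inv_mul_eq_div, div_div]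

set_option maxHeartbeats 1000000 in
lemma base_case (ε : ℕ → ℝ) (σ : ℝ) (hσ : 0 < σ) (h0 : 0 < EE ε 0) :
    IntegrableOn (fun s : Fin 1 → ℝ => ∏ i, s i ^ ε (i : ℕ)) (simplexSet 1 σ) volume ∧
    ∫ s in simplexSet 1 σ, (∏ i, s i ^ ε (i : ℕ)) ∂volume
      = σ ^ (EE ε 0) / ∏ k ∈ Finset.range 1, EE ε k := by
  have hE : EE ε 0 = ε 0 + 1 := by simp [EE]
  have hr : -1 < ε 0 := by rw [hE] at h0; linarith
  have hmp : MeasurePreserving (MeasurableEquiv.funUnique (Fin 1) ℝ) volume volume :=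
    volume_preserving_funUnique (Fin 1) ℝ
  have hemb := (MeasurableEquiv.funUnique (Fin 1) ℝ).measurableEmbedding
  have hset : simplexSet 1 σ = (MeasurableEquiv.funUnique (Fin 1) ℝ) ⁻¹' (Set.Ioc 0 σ) := by
    ext t
    simp only [simplexSet, Set.mem_setOf_eq, Set.mem_preimage]
    constructor
    · rintro ⟨-, h⟩; exact h default
    · intro h
      exact ⟨Subsingleton.strictMono t, fun i => by rwa [Subsingleton.elim i default]⟩
  have hfun : (fun s : Fin 1 → ℝ => ∏ i, s i ^ ε (i : ℕ)) =
      fun s => (MeasurableEquiv.funUnique (Fin 1) ℝ s) ^ ε 0 := by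
    funext s
    rw [Fin.prod_univ_one]
    rfl
  have hIoc : IntegrableOn (fun x : ℝ => x ^ ε 0) (Set.Ioc 0 σ) volume :=
    rpow_integrableOn_Ioc hσ hr
  constructor
  · rw [hset, hfun]
    exact ((hmp.restrict_preimage_emb hemb _).integrable_comp_emb hemb).2 hIoc
  · rw [hset, hfun]
    have key := hmp.setIntegral_preimage_emb hemb (fun x : ℝ => x ^ ε 0) (Set.Ioc 0 σ)
    refine key.trans ?_
    rw [← intervalIntegral.integral_of_le hσ.le, integral_rpow (Or.inl hr)]
    rw [Real.zero_rpow (by linarith), Finset.prod_range_one, hE]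
    ring

lemma main_aux : ∀ (m : ℕ) (ε : ℕ → ℝ) (σ : ℝ), 0 < σ → (∀ k, k ≤ m → 0 < EE ε k) →
    IntegrableOn (fun s : Fin (m + 1) → ℝ => ∏ i, s i ^ ε (i : ℕ)) (simplexSet (m + 1) σ)
      volume ∧
    ∫ s in simplexSet (m + 1) σ, (∏ i, s i ^ ε (i : ℕ)) ∂volume
      = σ ^ (EE ε m) / ∏ k ∈ Finset.range (m + 1), EE ε k := by
  intro m
  induction m with
  | zero => intro ε σ hσ hE; exact base_case ε σ hσ (hE 0 le_rfl)
  | succ m IH => intro ε σ hσ hE; exact step_case m IH ε σ hσ hE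

lemma main_aux' (m : ℕ) (hm : 1 ≤ m) (ε : ℕ → ℝ) (σ : ℝ) (hσ : 0 < σ)
    (hE : ∀ k, 0 < EE ε k) :
    ∫ s in simplexSet m σ, (∏ i : Fin m, s i ^ ε (i : ℕ)) ∂volume
      = σ ^ (EE ε (m - 1)) / ∏ k ∈ Finset.range m, EE ε k := by
  obtain ⟨m', rfl⟩ : ∃ k, m = k + 1 := ⟨m - 1, by omega⟩
  simpa using (main_aux m' ε σ hσ (fun k _ => hE k)).2


lemma sum_alt (α : ℝ) : ∀ j : ℕ, (∑ i ∈ Finset.range j, (if Even i then α else -α))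
    = if Even j then 0 else α := by
  intro j
  induction j with
  | zero => simp
  | succ j ih =>
    rw [Finset.sum_range_succ, ih]
    by_cases h : Even j <;> simp [h, Nat.even_add_one]

lemma EE_alt (α : ℝ) (k : ℕ) :
    EE (fun j => if Even j then α else -α) k
      = if Even k then α + k + 1 else (k : ℝ) + 1 := by
  unfold EE
  rw [sum_alt]
  by_cases h : Even k <;> simp [h, Nat.even_add_one] <;> ring

lemma EE_alt_pos (α : ℝ) (hα : 0 < α) (k : ℕ) :
    0 < EE (fun j => if Even j then α else -α) k := by
  rw [EE_alt]
  split <;> positivity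

lemma prod_EE (α : ℝ) : ∀ n : ℕ,
    (∏ k ∈ Finset.range (2 * n), EE (fun j => if Even j then α else -α) k)
      = 4 ^ n * (Nat.factorial n) * ∏ j ∈ Finset.range n, ((α + 1) / 2 + j) := by
  intro n
  induction n with
  | zero => simp
  | succ n ih =>
    rw [show 2 * (n + 1) = 2 * n + 1 + 1 from by ring, Finset.prod_range_succ,
      Finset.prod_range_succ, ih, EE_alt, EE_alt, Finset.prod_range_succ,
      Nat.factorial_succ, pow_succ]
    rw [if_pos (even_two_mul n), if_neg (by simp [Nat.even_add_one, even_two_mul n])]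
    push_cast
    ring

lemma gamma_prod (c : ℝ) (hc : 0 < c) : ∀ n : ℕ,
    Real.Gamma (c + n) = (∏ j ∈ Finset.range n, (c + j)) * Real.Gamma c := by
  intro n
  induction n with
  | zero => simp
  | succ n ih =>
    have h1 : c + (n + 1 : ℕ) = (c + n) + 1 := by push_cast; ring
    rw [h1, Real.Gamma_add_one (by positivity), ih, Finset.prod_range_succ]
    ring

/-- The ordered-simplex integral
`∫_{0<s₁<⋯<s_{2n}≤σ} (s₁ s₃ ⋯ s_{2n-1})^α / (s₂ s₄ ⋯ s_{2n})^α ds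
  = σ^{2n} Γ((α+1)/2) / (4ⁿ n! Γ((α+1)/2 + n))`.
(Indices here are zero-based: `s i` with `i` even corresponds to an odd one-based index,
hence appears with exponent `α`; `i` odd appears with exponent `-α`.) -/
theorem bessel_simplex_integral (α σ : ℝ) (hα : 0 < α) (hσ : 0 < σ) (n : ℕ) (hn : 1 ≤ n) :
    (∫ s in {t : Fin (2 * n) → ℝ | StrictMono t ∧ ∀ i, t i ∈ Set.Ioc 0 σ},
        ∏ i : Fin (2 * n), s i ^ (if Even (i : ℕ) then α else -α) ∂volume) =
      σ ^ (2 * n) * Real.Gamma ((α + 1) / 2) /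
        (4 ^ n * (Nat.factorial n) * Real.Gamma ((α + 1) / 2 + n)) := by
  have key : (∫ s in {t : Fin (2 * n) → ℝ | StrictMono t ∧ ∀ i, t i ∈ Set.Ioc 0 σ},
        ∏ i : Fin (2 * n), s i ^ (if Even (i : ℕ) then α else -α) ∂volume)
      = σ ^ (EE (fun j => if Even j then α else -α) (2 * n - 1))
          / ∏ k ∈ Finset.range (2 * n), EE (fun j => if Even j then α else -α) k :=
    main_aux' (2 * n) (by omega) (fun j => if Even j then α else -α) σ hσ (EE_alt_pos α hα)
  rw [key, EE_alt, prod_EE α n]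
  have hodd : ¬ Even (2 * n - 1) := by
    have h21 : 2 * n - 1 = 2 * (n - 1) + 1 := by omega
    rw [h21]
    simp [Nat.even_add_one, even_two_mul]
  rw [if_neg hodd]
  have hexp : ((2 * n - 1 : ℕ) : ℝ) + 1 = ((2 * n : ℕ) : ℝ) := by
    rw [Nat.cast_sub (by omega : 1 ≤ 2 * n)]
    push_cast
    ring
  rw [hexp, Real.rpow_natCast, gamma_prod ((α + 1) / 2) (by linarith) n]
  have hΓ : 0 < Real.Gamma ((α + 1) / 2) := Real.Gamma_pos_of_pos (by linarith)
  have hP : 0 < ∏ j ∈ Finset.range n, ((α + 1) / 2 + (j : ℝ)) :=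
    Finset.prod_pos fun j _ => by positivity
  have hfac : (0:ℝ) < (Nat.factorial n : ℝ) := by exact_mod_cast Nat.factorial_pos n
  field_simp
end

section
/- Let $G$ be a bounded interval, $k: G^2 \to \mathbb{R}$ measurable with $\iint_{G^2} |k(s,t)|^2\, ds\, dt < \infty$ and $\int_G |k(s,s)|\, ds < \infty$, and let $A$ be the integral operator on $L^2(G)$ with kernel $k$. Then for every $n \ge 1$, $\int_{G^n} \left|\det[k(t_i,t_j)]_{i,j=1}^n\right| dt_1 \cdots dt_n \le n! \left(\int_G |k(s,s)|\,ds + \|A\|_{HS}\right)^n$, where $\|A\|_{HS}$ is the Hilbert–Schmidt norm. -/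
open MeasureTheory Function Set ENNReal

namespace DetIntegralBoundAux

lemma sq_rpow_half (X : ℝ≥0∞) : (X ^ (1/2 : ℝ)) ^ 2 = X := by
  rw [← ENNReal.rpow_natCast (X ^ (1/2 : ℝ)) 2, ← ENNReal.rpow_mul]
  norm_num

lemma lintegral_mul_sq_le {α : Type*} [MeasurableSpace α] (μ : Measure α)
    {f g : α → ℝ≥0∞} (hf : AEMeasurable f μ) (hg : AEMeasurable g μ) :
    (∫⁻ x, f x * g x ∂μ) ^ 2 ≤ (∫⁻ x, f x ^ 2 ∂μ) * (∫⁻ x, g x ^ 2 ∂μ) := by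
  have hconj : Real.HolderConjugate 2 2 := Real.holderConjugate_iff.mpr ⟨one_lt_two, by norm_num⟩
  have h := ENNReal.lintegral_mul_le_Lp_mul_Lq μ hconj hf hg
  have h2 : ∀ x : ℝ≥0∞, x ^ (2:ℝ) = x ^ 2 := fun x => by
    rw [← ENNReal.rpow_natCast x 2]; norm_num
  simp only [Pi.mul_apply, h2] at h
  calc (∫⁻ x, f x * g x ∂μ) ^ 2
      ≤ ((∫⁻ x, f x ^ 2 ∂μ) ^ (1/2:ℝ) * (∫⁻ x, g x ^ 2 ∂μ) ^ (1/2:ℝ)) ^ 2 := by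
        exact pow_le_pow_left' h 2
    _ = (∫⁻ x, f x ^ 2 ∂μ) * (∫⁻ x, g x ^ 2 ∂μ) := by
        rw [mul_pow, sq_rpow_half, sq_rpow_half]

variable (ν : Measure ℝ) (F : ℝ → ℝ → ℝ≥0∞)

/-- Iterated kernel: `Kiter m` is the kernel of the `(m+1)`-st power of the integral
operator with kernel `F`. -/
noncomputable def Kiter : ℕ → ℝ → ℝ → ℝ≥0∞
  | 0 => F
  | (m+1) => fun a b => ∫⁻ x, F a x * Kiter m x b ∂ν

variable {ν F}

@[simp] lemma Kiter_zero : Kiter ν F 0 = F := rfl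

lemma Kiter_succ (m : ℕ) (a b : ℝ) :
    Kiter ν F (m+1) a b = ∫⁻ x, F a x * Kiter ν F m x b ∂ν := rfl

lemma measurable_Kiter [SFinite ν] (hF : Measurable (uncurry F)) (m : ℕ) :
    Measurable (uncurry (Kiter ν F m)) := by
  induction m with
  | zero => exact hF
  | succ m ih =>
    have : Measurable fun p : (ℝ × ℝ) × ℝ => F p.1.1 p.2 * Kiter ν F m p.2 p.1.2 := by
      apply Measurable.mul
      · exact hF.comp ((measurable_fst.comp measurable_fst).prodMk measurable_snd)
      · exact ih.comp (measurable_snd.prodMk (measurable_snd.comp measurable_fst))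
    exact this.lintegral_prod_right'

lemma measurable_Kiter_left [SFinite ν] (hF : Measurable (uncurry F)) (m : ℕ) (b : ℝ) :
    Measurable fun a => Kiter ν F m a b :=
  (measurable_Kiter hF m).comp (measurable_id.prodMk measurable_const)

lemma measurable_Kiter_right [SFinite ν] (hF : Measurable (uncurry F)) (m : ℕ) (a : ℝ) :
    Measurable fun b => Kiter ν F m a b :=
  (measurable_Kiter hF m).comp (measurable_const.prodMk measurable_id)

/-- `L²` bound on the iterated kernels. -/
lemma Kiter_sq_le [SFinite ν] (hF : Measurable (uncurry F)) (m : ℕ) :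
    (∫⁻ a, ∫⁻ b, (Kiter ν F m a b) ^ 2 ∂ν ∂ν)
        ≤ (∫⁻ a, ∫⁻ b, (F a b) ^ 2 ∂ν ∂ν) ^ (m + 1) := by
  induction m with
  | zero => simp
  | succ m ih =>
    set Hsq := ∫⁻ a, ∫⁻ b, (F a b) ^ 2 ∂ν ∂ν with hHsq
    have key : ∀ a b, (Kiter ν F (m+1) a b) ^ 2
        ≤ (∫⁻ x, F a x ^ 2 ∂ν) * (∫⁻ x, (Kiter ν F m x b) ^ 2 ∂ν) := by
      intro a b
      exact lintegral_mul_sq_le ν ((hF.comp (measurable_const.prodMk measurable_id)).aemeasurable)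
        ((measurable_Kiter_left hF m b).aemeasurable)
    calc ∫⁻ a, ∫⁻ b, (Kiter ν F (m+1) a b) ^ 2 ∂ν ∂ν
        ≤ ∫⁻ a, ∫⁻ b, (∫⁻ x, F a x ^ 2 ∂ν) * (∫⁻ x, (Kiter ν F m x b) ^ 2 ∂ν) ∂ν ∂ν := by
          refine lintegral_mono fun a => lintegral_mono fun b => key a b
      _ = ∫⁻ a, (∫⁻ x, F a x ^ 2 ∂ν) * (∫⁻ b, ∫⁻ x, (Kiter ν F m x b) ^ 2 ∂ν ∂ν) ∂ν := by
          refine lintegral_congr fun a => ?_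
          rw [lintegral_const_mul]
          exact ((measurable_Kiter hF m).pow_const 2).lintegral_prod_left'.comp measurable_id
      _ = (∫⁻ a, ∫⁻ x, F a x ^ 2 ∂ν ∂ν) * (∫⁻ b, ∫⁻ x, (Kiter ν F m x b) ^ 2 ∂ν ∂ν) := by
          rw [lintegral_mul_const]
          exact (hF.pow_const 2).lintegral_prod_right'.comp measurable_id
      _ = Hsq * (∫⁻ x, ∫⁻ b, (Kiter ν F m x b) ^ 2 ∂ν ∂ν) := by
          have hswap : AEMeasurable (uncurry fun b x => (Kiter ν F m x b) ^ 2) (ν.prod ν) :=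
            (((measurable_Kiter hF m).comp measurable_swap).pow_const 2).aemeasurable
          rw [lintegral_lintegral_swap hswap]
      _ ≤ Hsq * Hsq ^ (m+1) := by exact mul_le_mul_right ih _
      _ = Hsq ^ (m+1+1) := by ring


lemma rpow_half_sq (X : ℝ≥0∞) : (X ^ 2) ^ (1/2 : ℝ) = X := by
  rw [← ENNReal.rpow_natCast X 2, ← ENNReal.rpow_mul]
  norm_num

lemma pow_rpow_half_comm (X : ℝ≥0∞) (ℓ : ℕ) :
    (X ^ ℓ) ^ (1/2 : ℝ) = (X ^ (1/2 : ℝ)) ^ ℓ := by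
  rw [← ENNReal.rpow_natCast X ℓ, ← ENNReal.rpow_mul,
    ← ENNReal.rpow_natCast (X ^ (1/2:ℝ)) ℓ, ← ENNReal.rpow_mul, mul_comm]




/-- squared diagonal integral bound -/
lemma diag_sq_le [SFinite ν] (hF : Measurable (uncurry F))
    (m : ℕ) :
    (∫⁻ a, Kiter ν F (m+1) a a ∂ν) ^ 2
      ≤ (∫⁻ a, ∫⁻ b, (F a b) ^ 2 ∂ν ∂ν) ^ (m + 2) := by
  set Hsq := ∫⁻ a, ∫⁻ b, (F a b) ^ 2 ∂ν ∂ν with hHsq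
  have hmeas : AEMeasurable (uncurry fun a x => F a x * Kiter ν F m x a) (ν.prod ν) := by
    refine Measurable.aemeasurable ?_
    exact (hF.mul ((measurable_Kiter hF m).comp measurable_swap))
  have step1 : (∫⁻ a, Kiter ν F (m+1) a a ∂ν)
      = ∫⁻ p : ℝ × ℝ, F p.1 p.2 * Kiter ν F m p.2 p.1 ∂(ν.prod ν) := by
    have : (∫⁻ a, Kiter ν F (m+1) a a ∂ν)
        = ∫⁻ a, ∫⁻ x, F a x * Kiter ν F m x a ∂ν ∂ν := rfl
    rw [this, lintegral_lintegral hmeas]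
  have step2 := lintegral_mul_sq_le (ν.prod ν)
      (f := fun p : ℝ × ℝ => F p.1 p.2) (g := fun p : ℝ × ℝ => Kiter ν F m p.2 p.1)
      hF.aemeasurable ((measurable_Kiter hF m).comp measurable_swap).aemeasurable
  have e1 : (∫⁻ p : ℝ × ℝ, F p.1 p.2 ^ 2 ∂(ν.prod ν)) = Hsq := by
    rw [lintegral_prod (fun p : ℝ × ℝ => F p.1 p.2 ^ 2) ((hF.pow_const 2).aemeasurable)]
  have e2 : (∫⁻ p : ℝ × ℝ, (Kiter ν F m p.2 p.1) ^ 2 ∂(ν.prod ν)) ≤ Hsq ^ (m+1) := by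
    have swp : (∫⁻ p : ℝ × ℝ, (Kiter ν F m p.2 p.1) ^ 2 ∂(ν.prod ν))
        = ∫⁻ p : ℝ × ℝ, (Kiter ν F m p.1 p.2) ^ 2 ∂(ν.prod ν) := by
      rw [← lintegral_prod_swap (fun p : ℝ × ℝ => (Kiter ν F m p.1 p.2) ^ 2)]
      exact lintegral_congr fun z => rfl
    rw [swp, lintegral_prod (fun p : ℝ × ℝ => (Kiter ν F m p.1 p.2) ^ 2)
      (((measurable_Kiter hF m).pow_const 2).aemeasurable)]
    exact Kiter_sq_le hF m
  calc (∫⁻ a, Kiter ν F (m+1) a a ∂ν) ^ 2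
      = (∫⁻ p : ℝ × ℝ, F p.1 p.2 * Kiter ν F m p.2 p.1 ∂(ν.prod ν)) ^ 2 := by rw [step1]
    _ ≤ (∫⁻ p : ℝ × ℝ, F p.1 p.2 ^ 2 ∂(ν.prod ν)) *
        (∫⁻ p : ℝ × ℝ, (Kiter ν F m p.2 p.1) ^ 2 ∂(ν.prod ν)) := step2
    _ ≤ Hsq * Hsq ^ (m+1) := by rw [e1]; exact mul_le_mul_right e2 _
    _ = Hsq ^ (m+2) := by ring


section Path
variable [SigmaFinite ν]

/-- Peeling the first coordinate of a `Fin (m+1)`-indexed pi lintegral. -/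
lemma lintegral_pi_succ (m : ℕ) (f : (Fin (m+1) → ℝ) → ℝ≥0∞) (hf : Measurable f) :
    ∫⁻ t, f t ∂(Measure.pi fun _ : Fin (m+1) => ν)
      = ∫⁻ x, ∫⁻ u, f (Fin.cons x u) ∂(Measure.pi fun _ : Fin m => ν) ∂ν := by
  have mp := (measurePreserving_piFinSuccAbove (fun _ : Fin (m+1) => ν) 0).symm
  set e := (MeasurableEquiv.piFinSuccAbove (fun _ : Fin (m+1) => ℝ) 0).symm with he
  rw [← mp.lintegral_comp hf,
    lintegral_prod (fun z : ℝ × (Fin m → ℝ) => f (e z)) ((hf.comp e.measurable).aemeasurable)]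
  refine lintegral_congr fun x => lintegral_congr fun u => ?_
  congr 1
  simp only [he, MeasurableEquiv.piFinSuccAbove_symm_apply, Fin.insertNthEquiv,
    Equiv.coe_fn_mk, Fin.insertNth_zero]
  rfl

/-- The path `a, u 0, u 1, ..., u (m-1), b` as a tuple. -/
def pathQ (m : ℕ) (a b : ℝ) (u : Fin m → ℝ) : Fin (m+2) → ℝ :=
  Fin.cons a (Fin.snoc u b)

/-- The product of `F` along the path `a, u 0, u 1, ..., u (m-1), b`. -/
noncomputable def pathP (F : ℝ → ℝ → ℝ≥0∞) (m : ℕ) (a b : ℝ) (u : Fin m → ℝ) : ℝ≥0∞ :=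
  ∏ i : Fin (m+1), F (pathQ m a b u i.castSucc) (pathQ m a b u i.succ)

lemma measurable_consSnoc (m : ℕ) (a b : ℝ) (j : Fin (m+2)) :
    Measurable fun u : Fin m → ℝ => pathQ m a b u j := by
  unfold pathQ
  refine Fin.cases ?_ ?_ j
  · simpa [Fin.cons_zero] using measurable_const
  · intro j'
    simp only [Fin.cons_succ]
    refine Fin.lastCases ?_ ?_ j'
    · simpa [Fin.snoc_last] using measurable_const
    · intro j''
      simpa [Fin.snoc_castSucc] using measurable_pi_apply j''

lemma measurable_pathP (hF : Measurable (uncurry F)) (m : ℕ) (a b : ℝ) :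
    Measurable fun u => pathP F m a b u := by
  refine Finset.measurable_prod _ fun i _ => ?_
  exact hF.comp ((measurable_consSnoc m a b i.castSucc).prodMk (measurable_consSnoc m a b i.succ))

lemma pathP_zero (a b : ℝ) (u : Fin 0 → ℝ) : pathP F 0 a b u = F a b := by
  simp [pathP, pathQ, Fin.prod_univ_one, Fin.cons_succ, Fin.snoc]

lemma pathQ_succ (m : ℕ) (a b x : ℝ) (v : Fin m → ℝ) (j : Fin (m+2)) :
    pathQ (m+1) a b (Fin.cons x v) j.succ = pathQ m x b v j := by
  unfold pathQ
  rw [Fin.cons_succ, Fin.cons_snoc_eq_snoc_cons]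

lemma pathP_cons (m : ℕ) (a b x : ℝ) (v : Fin m → ℝ) :
    pathP F (m+1) a b (Fin.cons x v) = F a x * pathP F m x b v := by
  unfold pathP
  rw [Fin.prod_univ_succ]
  congr 1
  · refine Finset.prod_congr rfl fun i _ => ?_
    have h1 : pathQ (m+1) a b (Fin.cons x v) i.succ.castSucc
        = pathQ m x b v i.castSucc := by
      rw [← Fin.succ_castSucc, pathQ_succ]
    have h2 : pathQ (m+1) a b (Fin.cons x v) i.succ.succ
        = pathQ m x b v i.succ := by
      rw [pathQ_succ]
    rw [h1, h2]

lemma pathP_lintegral (hF : Measurable (uncurry F)) (m : ℕ) :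
    ∀ a b : ℝ, ∫⁻ u, pathP F m a b u ∂(Measure.pi fun _ : Fin m => ν) = Kiter ν F m a b := by
  induction m with
  | zero =>
    intro a b
    rw [Measure.pi_of_empty (fun _ : Fin 0 => ν)]
    rw [lintegral_dirac' _ (measurable_pathP hF 0 a b)]
    exact pathP_zero a b _
  | succ m ih =>
    intro a b
    rw [lintegral_pi_succ m _ (measurable_pathP hF (m+1) a b)]
    have : ∀ x, ∫⁻ u, pathP F (m+1) a b (Fin.cons x u) ∂(Measure.pi fun _ : Fin m => ν)
        = F a x * Kiter ν F m x b := by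
      intro x
      simp_rw [pathP_cons]
      rw [lintegral_const_mul _ (measurable_pathP hF m x b), ih x b]
    simp_rw [this]
    rfl

/-- The cyclic integral equals the diagonal integral of the iterated kernel. -/
lemma cycle_lintegral (hF : Measurable (uncurry F)) (m : ℕ) :
    ∫⁻ t : Fin (m+1) → ℝ, ∏ i : Fin (m+1), F (t i) (t (finRotate (m+1) i))
        ∂(Measure.pi fun _ : Fin (m+1) => ν)
      = ∫⁻ a, Kiter ν F m a a ∂ν := by
  have hmeas : Measurable fun t : Fin (m+1) → ℝ =>
      ∏ i : Fin (m+1), F (t i) (t (finRotate (m+1) i)) := by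
    refine Finset.measurable_prod
      (f := fun (i : Fin (m+1)) (t : Fin (m+1) → ℝ) => F (t i) (t (finRotate (m+1) i)))
      Finset.univ fun i _ => ?_
    have h : Measurable fun t : Fin (m+1) → ℝ => uncurry F (t i, t (finRotate (m+1) i)) :=
      hF.comp ((measurable_pi_apply i).prodMk (measurable_pi_apply (finRotate (m+1) i)))
    exact h
  rw [lintegral_pi_succ m _ hmeas]
  have key : ∀ (x : ℝ) (v : Fin m → ℝ),
      (∏ i : Fin (m+1), F ((Fin.cons x v : Fin (m+1) → ℝ) i)
          ((Fin.cons x v : Fin (m+1) → ℝ) (finRotate (m+1) i)))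
        = pathP F m x x v := by
    intro x v
    unfold pathP pathQ
    refine Finset.prod_congr rfl fun i _ => ?_
    have h1 : (Fin.cons x v : Fin (m+1) → ℝ) i
        = (Fin.cons x (Fin.snoc v x) : Fin (m+2) → ℝ) i.castSucc := by
      refine Fin.cases ?_ (fun j => ?_) i
      · simp
      · rw [← Fin.succ_castSucc]
        simp [Fin.cons_succ, Fin.snoc_castSucc]
    have h2 : (Fin.cons x v : Fin (m+1) → ℝ) (finRotate (m+1) i)
        = (Fin.cons x (Fin.snoc v x) : Fin (m+2) → ℝ) i.succ := by
      rw [finRotate_succ_apply]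
      refine Fin.lastCases ?_ (fun j => ?_) i
      · rw [Fin.last_add_one, Fin.cons_zero, Fin.cons_succ, Fin.snoc_last]
      · rw [Fin.coeSucc_eq_succ]
        simp [Fin.cons_succ, Fin.snoc_castSucc]
    rw [h1, h2]
  simp_rw [key]
  simp_rw [pathP_lintegral hF m]

end Path

/-- Bound on the cyclic integral. -/
lemma cycle_le [SigmaFinite ν] (hF : Measurable (uncurry F)) (m : ℕ) :
    ∫⁻ t : Fin (m+1) → ℝ, ∏ i : Fin (m+1), F (t i) (t (finRotate (m+1) i))
        ∂(Measure.pi fun _ : Fin (m+1) => ν)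
      ≤ ((∫⁻ a, F a a ∂ν) + (∫⁻ a, ∫⁻ b, (F a b) ^ 2 ∂ν ∂ν) ^ (1/2:ℝ)) ^ (m+1) := by
  rw [cycle_lintegral hF m]
  cases m with
  | zero =>
    rw [pow_one]
    exact le_trans (le_of_eq rfl) le_self_add
  | succ m =>
    have h2 := diag_sq_le (ν := ν) hF m
    have h3 : (∫⁻ a, Kiter ν F (m+1) a a ∂ν)
        ≤ ((∫⁻ a, ∫⁻ b, (F a b) ^ 2 ∂ν ∂ν) ^ (1/2:ℝ)) ^ (m+2) := by
      have h4 := ENNReal.rpow_le_rpow h2 (by norm_num : (0:ℝ) ≤ 1/2)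
      rwa [rpow_half_sq, pow_rpow_half_comm] at h4
    exact h3.trans (pow_le_pow_left' le_add_self (m+2))

section PermSec

lemma measurable_permProd {κ : Type*} [Fintype κ] (hF : Measurable (uncurry F)) (σ : κ → κ) :
    Measurable fun t : κ → ℝ => ∏ i, F (t i) (t (σ i)) := by
  refine Finset.measurable_prod
    (f := fun (i : κ) (t : κ → ℝ) => F (t i) (t (σ i))) Finset.univ fun i _ => ?_
  have h : Measurable fun t : κ → ℝ => uncurry F (t i, t (σ i)) :=
    hF.comp ((measurable_pi_apply i).prodMk (measurable_pi_apply (σ i)))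
  exact h

lemma subtypePerm_iterate_coe {ι : Type*} (σ : Equiv.Perm ι) {p : ι → Prop}
    (h : ∀ x, p x ↔ p (σ x)) (m : ℕ) (y : {x // p x}) :
    (((σ.subtypePerm (fun x => (h x).symm))^[m] y : {x // p x}) : ι) = (⇑σ)^[m] (y : ι) := by
  induction m with
  | zero => rfl
  | succ m ih =>
    rw [Function.iterate_succ_apply', Function.iterate_succ_apply']
    exact congrArg (⇑σ) ih

/-- Bound for the pi-integral over a single orbit. -/
lemma orbit_le [SigmaFinite ν] (hF : Measurable (uncurry F)) {ι : Type} [Fintype ι]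
    [DecidableEq ι] (σ : Equiv.Perm ι) (x : ι) (hx : ∀ y : ι, ∃ m : ℕ, (⇑σ)^[m] x = y) :
    ∫⁻ t : ι → ℝ, ∏ i, F (t i) (t (σ i)) ∂(Measure.pi fun _ : ι => ν)
      ≤ ((∫⁻ a, F a a ∂ν) + (∫⁻ a, ∫⁻ b, (F a b) ^ 2 ∂ν ∂ν) ^ (1/2:ℝ)) ^ (Fintype.card ι) := by
  classical
  haveI : Nonempty ι := ⟨x⟩
  have hper : Function.IsPeriodicPt (⇑σ) (orderOf σ) x := by
    show (⇑σ)^[orderOf σ] x = x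
    have : (⇑σ)^[orderOf σ] x = (⇑(σ ^ orderOf σ)) x := by
      rw [← Equiv.Perm.iterate_eq_pow]
    rw [this, pow_orderOf_eq_one σ, Equiv.Perm.one_apply]
  have hd : 0 < Function.minimalPeriod (⇑σ) x :=
    hper.minimalPeriod_pos (orderOf_pos σ)
  obtain ⟨m, hm⟩ : ∃ mm, Function.minimalPeriod (⇑σ) x = mm + 1 :=
    ⟨_, (Nat.succ_pred_eq_of_pos hd).symm⟩
  have hinj := Function.iterate_injOn_Iio_minimalPeriod (f := ⇑σ) (x := x)
  rw [hm] at hinj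
  have hmod : ∀ n : ℕ, (⇑σ)^[n % (m+1)] x = (⇑σ)^[n] x := by
    intro n
    have h := Function.iterate_mod_minimalPeriod_eq (f := ⇑σ) (x := x) (n := n)
    rwa [hm] at h
  have e0inj : Function.Injective (fun j : Fin (m+1) => (⇑σ)^[(j : ℕ)] x) := by
    intro a b hab
    exact Fin.ext (hinj a.isLt b.isLt hab)
  have e0surj : Function.Surjective (fun j : Fin (m+1) => (⇑σ)^[(j : ℕ)] x) := by
    intro y
    obtain ⟨mm, rfl⟩ := hx y
    exact ⟨⟨mm % (m+1), Nat.mod_lt _ (Nat.succ_pos m)⟩, hmod mm⟩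
  set e : Fin (m+1) ≃ ι := Equiv.ofBijective _ ⟨e0inj, e0surj⟩ with he
  have hcard : Fintype.card ι = m + 1 := by
    rw [← Fintype.card_fin (m+1)]
    exact (Fintype.card_congr e).symm
  have hconj : ∀ j : Fin (m+1), σ (e j) = e (finRotate (m+1) j) := by
    intro j
    have h1 : σ (e j) = (⇑σ)^[(j : ℕ) + 1] x := by
      rw [Function.iterate_succ_apply']
      rfl
    have h2 : e (finRotate (m+1) j) = (⇑σ)^[((finRotate (m+1) j : Fin (m+1)) : ℕ)] x := rfl
    have h3 : ((finRotate (m+1) j : Fin (m+1)) : ℕ) = ((j : ℕ) + 1) % (m+1) := by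
      rw [finRotate_succ_apply, Fin.val_add, Fin.val_one']
      exact Nat.add_mod_mod _ _ _
    rw [h1, h2, h3, hmod]
  have hf : Measurable fun t : ι → ℝ => ∏ i, F (t i) (t (σ i)) :=
    measurable_permProd hF σ
  have mp := measurePreserving_piCongrLeft (fun _ : ι => ν) e
  rw [← mp.lintegral_comp hf]
  have key : ∀ u : Fin (m+1) → ℝ,
      (∏ i, F ((MeasurableEquiv.piCongrLeft (fun _ : ι => ℝ) e) u i)
        ((MeasurableEquiv.piCongrLeft (fun _ : ι => ℝ) e) u (σ i)))
      = ∏ j : Fin (m+1), F (u j) (u (finRotate (m+1) j)) := by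
    intro u
    rw [← Equiv.prod_comp e (fun i => F ((MeasurableEquiv.piCongrLeft (fun _ : ι => ℝ) e) u i)
      ((MeasurableEquiv.piCongrLeft (fun _ : ι => ℝ) e) u (σ i)))]
    refine Finset.prod_congr rfl fun j _ => ?_
    have hw : ∀ j' : Fin (m+1), (MeasurableEquiv.piCongrLeft (fun _ : ι => ℝ) e) u (e j') = u j' := by
      intro j'
      simp [MeasurableEquiv.piCongrLeft, Equiv.piCongrLeft_apply_apply]
    rw [hw j, hconj j, hw (finRotate (m+1) j)]
  calc ∫⁻ u : Fin (m+1) → ℝ, (fun t : ι → ℝ => ∏ i, F (t i) (t (σ i)))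
        ((MeasurableEquiv.piCongrLeft (fun _ : ι => ℝ) e) u) ∂(Measure.pi fun _ : Fin (m+1) => ν)
      = ∫⁻ u : Fin (m+1) → ℝ, ∏ j : Fin (m+1), F (u j) (u (finRotate (m+1) j))
          ∂(Measure.pi fun _ : Fin (m+1) => ν) := lintegral_congr fun u => key u
    _ ≤ ((∫⁻ a, F a a ∂ν) + (∫⁻ a, ∫⁻ b, (F a b) ^ 2 ∂ν ∂ν) ^ (1/2:ℝ)) ^ (m+1) :=
        cycle_le hF m
    _ = _ := by rw [hcard]

lemma perm_le_empty [SigmaFinite ν] {ι : Type} [Fintype ι] [IsEmpty ι] (σ : Equiv.Perm ι) :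
    ∫⁻ t : ι → ℝ, ∏ i, F (t i) (t (σ i)) ∂(Measure.pi fun _ : ι => ν) = 1 := by
  have h : ∀ t : ι → ℝ, (∏ i, F (t i) (t (σ i))) = 1 := by
    intro t
    simp
  simp_rw [h]
  rw [lintegral_one, Measure.pi_of_empty (fun _ : ι => ν)]
  simp

/-- Main permutation bound: the pi-integral of the product `∏ F (t i) (t (σ i))`. -/
lemma perm_le [SigmaFinite ν] (hF : Measurable (uncurry F)) :
    ∀ (n : ℕ) (ι : Type) [Fintype ι] [DecidableEq ι], Fintype.card ι ≤ n →
      ∀ σ : Equiv.Perm ι,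
      ∫⁻ t : ι → ℝ, ∏ i, F (t i) (t (σ i)) ∂(Measure.pi fun _ : ι => ν)
        ≤ ((∫⁻ a, F a a ∂ν) + (∫⁻ a, ∫⁻ b, (F a b) ^ 2 ∂ν ∂ν) ^ (1/2:ℝ))
            ^ (Fintype.card ι) := by
  intro n
  induction n with
  | zero =>
    intro ι instF instD hcard σ
    haveI : IsEmpty ι := Fintype.card_eq_zero_iff.mp (Nat.le_zero.mp hcard)
    rw [perm_le_empty σ, Fintype.card_eq_zero, pow_zero]
  | succ n ih =>
    intro ι instF instD hcard σ
    by_cases hzero : Fintype.card ι = 0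
    · haveI : IsEmpty ι := Fintype.card_eq_zero_iff.mp hzero
      rw [perm_le_empty σ, hzero, pow_zero]
    haveI hne : Nonempty ι := Fintype.card_pos_iff.mp (Nat.pos_of_ne_zero hzero)
    classical
    obtain ⟨x⟩ := hne
    set O : Set ι := {y | ∃ m : ℕ, (⇑σ)^[m] x = y} with hO
    haveI : DecidablePred (· ∈ O) := Classical.decPred _
    have hxO : x ∈ O := ⟨0, rfl⟩
    have hper : Function.IsPeriodicPt (⇑σ) (orderOf σ) x := by
      show (⇑σ)^[orderOf σ] x = x
      have h1 : (⇑σ)^[orderOf σ] x = (⇑(σ ^ orderOf σ)) x := by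
        rw [← Equiv.Perm.iterate_eq_pow]
      rw [h1, pow_orderOf_eq_one σ, Equiv.Perm.one_apply]
    have hd : 0 < Function.minimalPeriod (⇑σ) x :=
      hper.minimalPeriod_pos (orderOf_pos σ)
    have hxd : (⇑σ)^[Function.minimalPeriod (⇑σ) x] x = x :=
      Function.iterate_minimalPeriod
    have hmem : ∀ y, y ∈ O ↔ σ y ∈ O := by
      intro y
      constructor
      · rintro ⟨mm, rfl⟩
        exact ⟨mm + 1, by rw [Function.iterate_succ_apply']⟩
      · rintro ⟨mm, hmm⟩
        refine ⟨mm + Function.minimalPeriod (⇑σ) x - 1, ?_⟩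
        have h1 : mm + Function.minimalPeriod (⇑σ) x
            = (mm + Function.minimalPeriod (⇑σ) x - 1) + 1 := by omega
        have h2 : (⇑σ)^[mm + Function.minimalPeriod (⇑σ) x] x = σ y := by
          rw [Function.iterate_add_apply, hxd, hmm]
        rw [h1, Function.iterate_succ_apply'] at h2
        exact σ.injective h2
    have hmem' : ∀ y, y ∈ {z | ¬ z ∈ O} ↔ σ y ∈ {z | ¬ z ∈ O} := fun y =>
      not_congr (hmem y)
    set σ₁ := σ.subtypePerm (fun y => (hmem y).symm) with hσ₁
    set σ₂ := σ.subtypePerm (fun y => (hmem' y).symm) with hσ₂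
    set D := ∫⁻ a, F a a ∂ν
    set Hl := (∫⁻ a, ∫⁻ b, (F a b) ^ 2 ∂ν ∂ν) ^ (1/2:ℝ)
    have hf : Measurable fun t : ι → ℝ => ∏ i, F (t i) (t (σ i)) :=
      measurable_permProd hF σ
    set e := MeasurableEquiv.piEquivPiSubtypeProd (fun _ : ι => ℝ) (· ∈ O) with he
    have mp := (measurePreserving_piEquivPiSubtypeProd (fun _ : ι => ν) (· ∈ O)).symm
    rw [← mp.lintegral_comp hf]
    have key : ∀ z : ({y // y ∈ O} → ℝ) × ({y // ¬ y ∈ O} → ℝ),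
        (∏ i, F (e.symm z i) (e.symm z (σ i)))
          = (∏ i : {y // y ∈ O}, F (z.1 i) (z.1 (σ₁ i)))
            * (∏ i : {y // ¬ y ∈ O}, F (z.2 i) (z.2 (σ₂ i))) := by
      intro z
      have hw1 : ∀ (i : ι) (h : i ∈ O), e.symm z i = z.1 ⟨i, h⟩ := by
        intro i h
        show (if h' : i ∈ O then z.1 ⟨i, h'⟩ else z.2 ⟨i, h'⟩) = z.1 ⟨i, h⟩
        rw [dif_pos h]
      have hw2 : ∀ (i : ι) (h : ¬ i ∈ O), e.symm z i = z.2 ⟨i, h⟩ := by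
        intro i h
        show (if h' : i ∈ O then z.1 ⟨i, h'⟩ else z.2 ⟨i, h'⟩) = z.2 ⟨i, h⟩
        rw [dif_neg h]
      rw [← Fintype.prod_subtype_mul_prod_subtype (· ∈ O)
        (fun i : ι => F (e.symm z i) (e.symm z (σ i)))]
      congr 1
      · refine Finset.prod_congr rfl fun i _ => ?_
        rw [hw1 i.1 i.2, hw1 (σ i.1) ((hmem i.1).mp i.2)]
        rfl
      · refine Finset.prod_congr rfl fun i _ => ?_
        rw [hw2 i.1 i.2, hw2 (σ i.1) ((hmem' i.1).mp i.2)]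
        rfl
    have hg1 : Measurable fun u : {y // y ∈ O} → ℝ => ∏ i, F (u i) (u (σ₁ i)) :=
      measurable_permProd hF σ₁
    have hg2 : Measurable fun v : {y // ¬ y ∈ O} → ℝ => ∏ i, F (v i) (v (σ₂ i)) :=
      measurable_permProd hF σ₂
    calc ∫⁻ z, (fun t : ι → ℝ => ∏ i, F (t i) (t (σ i))) (e.symm z)
          ∂((Measure.pi fun _ : {y // y ∈ O} => ν).prod (Measure.pi fun _ : {y // ¬ y ∈ O} => ν))
        = ∫⁻ z, (∏ i : {y // y ∈ O}, F (z.1 i) (z.1 (σ₁ i)))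
            * (∏ i : {y // ¬ y ∈ O}, F (z.2 i) (z.2 (σ₂ i)))
          ∂((Measure.pi fun _ : {y // y ∈ O} => ν).prod
            (Measure.pi fun _ : {y // ¬ y ∈ O} => ν)) := lintegral_congr fun z => key z
      _ = (∫⁻ u, ∏ i : {y // y ∈ O}, F (u i) (u (σ₁ i)) ∂(Measure.pi fun _ => ν))
          * (∫⁻ v, ∏ i : {y // ¬ y ∈ O}, F (v i) (v (σ₂ i)) ∂(Measure.pi fun _ => ν)) :=
          lintegral_prod_mul hg1.aemeasurable hg2.aemeasurable
      _ ≤ (D + Hl) ^ (Fintype.card {y // y ∈ O}) * (D + Hl) ^ (Fintype.card {y // ¬ y ∈ O}) := by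
          refine mul_le_mul' ?_ ?_
          · refine orbit_le hF σ₁ ⟨x, hxO⟩ ?_
            rintro ⟨y, ⟨mm, hmm⟩⟩
            refine ⟨mm, ?_⟩
            ext
            rw [subtypePerm_iterate_coe (h := hmem)]
            exact hmm
          · have hcO : 0 < Fintype.card {y // y ∈ O} :=
              Fintype.card_pos_iff.mpr ⟨⟨x, hxO⟩⟩
            have hcc : Fintype.card {y // ¬ y ∈ O} ≤ n := by
              have h1 := Fintype.card_subtype_compl (fun y : ι => y ∈ O)
              have h2 : Fintype.card {y // y ∈ O} ≤ Fintype.card ι :=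
                Fintype.card_subtype_le _
              omega
            exact ih {y // ¬ y ∈ O} hcc σ₂
      _ = (D + Hl) ^ (Fintype.card ι) := by
          rw [← pow_add]
          congr 1
          have h1 := Fintype.card_subtype_compl (fun y : ι => y ∈ O)
          have h2 : Fintype.card {y // y ∈ O} ≤ Fintype.card ι :=
            Fintype.card_subtype_le _
          omega

lemma measurable_permProd₂ {κ : Type*} [Fintype κ] (hF : Measurable (uncurry F))
    (f g : κ → κ) :
    Measurable fun t : κ → ℝ => ∏ i, F (t (f i)) (t (g i)) := by
  refine Finset.measurable_prod
    (f := fun (i : κ) (t : κ → ℝ) => F (t (f i)) (t (g i))) Finset.univ fun i _ => ?_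
  have h : Measurable fun t : κ → ℝ => uncurry F (t (f i), t (g i)) :=
    hF.comp ((measurable_pi_apply (f i)).prodMk (measurable_pi_apply (g i)))
  exact h

lemma restrict_pi_pi (n : ℕ) (μ : Measure ℝ) [SigmaFinite μ] (s : Set ℝ)
    (hs : MeasurableSet s) :
    Measure.pi (fun _ : Fin n => μ.restrict s)
      = (Measure.pi fun _ : Fin n => μ).restrict (Set.univ.pi fun _ => s) := by
  refine Measure.pi_eq fun t ht => ?_
  rw [Measure.restrict_apply (MeasurableSet.univ_pi ht), ← Set.pi_inter_distrib,
    Measure.pi_pi]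
  exact Finset.prod_congr rfl fun i _ => (Measure.restrict_apply (ht i)).symm

end PermSec

end DetIntegralBoundAux

namespace DetIntegralBoundAux

lemma det_abs_le {n : ℕ} (A : Matrix (Fin n) (Fin n) ℝ) :
    |A.det| ≤ ∑ σ : Equiv.Perm (Fin n), ∏ i, |A (σ i) i| := by
  rw [Matrix.det_apply]
  refine (Finset.abs_sum_le_sum_abs _ _).trans ?_
  refine Finset.sum_le_sum fun σ _ => ?_
  rw [Units.smul_def, zsmul_eq_mul, abs_mul, Finset.abs_prod]
  have h1 : |((Equiv.Perm.sign σ : ℤ) : ℝ)| = 1 := by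
    rcases Int.units_eq_one_or (Equiv.Perm.sign σ) with h | h <;> simp [h]
  rw [h1, one_mul]

lemma measurable_detk {n : ℕ} (k : ℝ → ℝ → ℝ) (hk : Measurable (Function.uncurry k)) :
    Measurable fun t : Fin n → ℝ =>
      Matrix.det (Matrix.of fun i j : Fin n => k (t i) (t j)) := by
  simp_rw [Matrix.det_apply]
  refine Finset.measurable_sum _ fun σ _ => ?_
  simp_rw [Units.smul_def, zsmul_eq_mul]
  refine Measurable.const_mul ?_ _
  refine Finset.measurable_prod
    (f := fun (i : Fin n) (t : Fin n → ℝ) => k (t (σ i)) (t i)) Finset.univ fun i _ => ?_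
  have h : Measurable fun t : Fin n → ℝ => Function.uncurry k (t (σ i), t i) :=
    hk.comp ((measurable_pi_apply (σ i)).prodMk (measurable_pi_apply i))
  exact h

end DetIntegralBoundAux

open DetIntegralBoundAux

/-- For a square-integrable kernel `k` on a bounded interval `G` with
integrable diagonal, the integral of the absolute value of the `n × n` determinant
`det [k(tᵢ,tⱼ)]` over `Gⁿ` is bounded by `n! (∫_G |k(s,s)| ds + ‖A‖_HS)ⁿ`, where the
Hilbert–Schmidt norm of the integral operator `A` with kernel `k` is the `L²` norm of
the kernel. -/
theorem det_integral_bound (G : Set ℝ) (hG : Bornology.IsBounded G)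
    (hGi : G.OrdConnected) (hGm : MeasurableSet G)
    (k : ℝ → ℝ → ℝ) (hk : Measurable (Function.uncurry k))
    (hk2 : IntegrableOn (fun p : ℝ × ℝ => (k p.1 p.2) ^ 2) (G ×ˢ G))
    (hkd : IntegrableOn (fun s => |k s s|) G) (n : ℕ) (hn : 1 ≤ n) :
    (∫ t in Set.univ.pi (fun _ : Fin n => G),
        |Matrix.det (Matrix.of fun i j : Fin n => k (t i) (t j))| ∂volume) ≤
      (Nat.factorial n) *
        ((∫ s in G, |k s s|) +
          Real.sqrt (∫ p in G ×ˢ G, (k p.1 p.2) ^ 2)) ^ n := by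
  classical
  set ν : Measure ℝ := volume.restrict G with hν
  set F : ℝ → ℝ → ℝ≥0∞ := fun s t => ENNReal.ofReal |k s t| with hFdef
  have hFm : Measurable (Function.uncurry F) := by
    have h : Measurable fun p : ℝ × ℝ => |k p.1 p.2| := hk.abs
    exact h.ennreal_ofReal
  set D := ∫ s in G, |k s s| with hD
  set Q := ∫ p in G ×ˢ G, (k p.1 p.2) ^ 2 with hQ
  have hD0 : 0 ≤ D := integral_nonneg fun s => abs_nonneg _
  have hQ0 : 0 ≤ Q := integral_nonneg fun p => sq_nonneg _
  have hRHS0 : 0 ≤ (n.factorial : ℝ) * (D + Real.sqrt Q) ^ n := by positivity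
  have hdet : Measurable fun t : Fin n → ℝ =>
      |Matrix.det (Matrix.of fun i j : Fin n => k (t i) (t j))| :=
    (measurable_detk k hk).abs
  rw [integral_eq_lintegral_of_nonneg_ae
    (Filter.Eventually.of_forall fun t => abs_nonneg _) hdet.aestronglyMeasurable]
  refine ENNReal.toReal_le_of_le_ofReal hRHS0 ?_
  have hmeas_eq : (volume : Measure (Fin n → ℝ)).restrict (Set.univ.pi fun _ => G)
      = Measure.pi (fun _ : Fin n => ν) := by
    rw [volume_pi]
    exact (restrict_pi_pi n volume G hGm).symm
  rw [hmeas_eq]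
  -- the key ENNReal quantities
  set Dl := ∫⁻ a, F a a ∂ν with hDl
  set Hl := (∫⁻ a, ∫⁻ b, (F a b) ^ 2 ∂ν ∂ν) ^ (1/2:ℝ) with hHl
  -- pointwise bound
  have hpoint : ∀ t : Fin n → ℝ,
      ENNReal.ofReal |Matrix.det (Matrix.of fun i j : Fin n => k (t i) (t j))|
        ≤ ∑ σ : Equiv.Perm (Fin n), ∏ i, F (t (σ i)) (t i) := by
    intro t
    refine le_trans (ENNReal.ofReal_le_ofReal
      (det_abs_le (Matrix.of fun i j : Fin n => k (t i) (t j)))) ?_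
    rw [ENNReal.ofReal_sum_of_nonneg fun σ _ =>
      Finset.prod_nonneg fun i _ => abs_nonneg _]
    refine Finset.sum_le_sum fun σ _ => ?_
    rw [ENNReal.ofReal_prod_of_nonneg fun i _ => abs_nonneg _]
    exact le_of_eq (Finset.prod_congr rfl fun i _ => rfl)
  -- sum and bound each term
  calc ∫⁻ t, ENNReal.ofReal
        |Matrix.det (Matrix.of fun i j : Fin n => k (t i) (t j))|
        ∂(Measure.pi fun _ : Fin n => ν)
      ≤ ∫⁻ t, ∑ σ : Equiv.Perm (Fin n), ∏ i, F (t (σ i)) (t i)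
          ∂(Measure.pi fun _ : Fin n => ν) := lintegral_mono hpoint
    _ = ∑ σ : Equiv.Perm (Fin n), ∫⁻ t, ∏ i, F (t (σ i)) (t i)
          ∂(Measure.pi fun _ : Fin n => ν) := by
        refine lintegral_finset_sum _ fun σ _ => ?_
        exact measurable_permProd₂ hFm (⇑σ) id
    _ ≤ ∑ _σ : Equiv.Perm (Fin n), (Dl + Hl) ^ n := by
        refine Finset.sum_le_sum fun σ _ => ?_
        have hre : ∀ t : Fin n → ℝ,
            (∏ i, F (t (σ i)) (t i)) = ∏ i, F (t i) (t (σ⁻¹ i)) := by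
          intro t
          rw [← Equiv.prod_comp σ⁻¹ (fun i => F (t (σ i)) (t i))]
          refine Finset.prod_congr rfl fun i _ => ?_
          rw [Equiv.Perm.inv_def, Equiv.apply_symm_apply]
        simp_rw [hre]
        have h := perm_le (ν := ν) hFm n (Fin n) (le_of_eq (Fintype.card_fin n)) σ⁻¹
        rwa [Fintype.card_fin] at h
    _ = (n.factorial : ℝ≥0∞) * (Dl + Hl) ^ n := by
        rw [Finset.sum_const, Finset.card_univ, Fintype.card_perm, Fintype.card_fin,
          nsmul_eq_mul]
    _ ≤ ENNReal.ofReal ((n.factorial : ℝ) * (D + Real.sqrt Q) ^ n) := by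
        -- identify Dl and Hl
        have hDl' : Dl = ENNReal.ofReal D := by
          rw [hDl, hD, ofReal_integral_eq_lintegral_ofReal hkd
            (Filter.Eventually.of_forall fun s => abs_nonneg _)]
        have hHsq : (∫⁻ a, ∫⁻ b, (F a b) ^ 2 ∂ν ∂ν) = ENNReal.ofReal Q := by
          have h1 : ENNReal.ofReal Q
              = ∫⁻ p : ℝ × ℝ, ENNReal.ofReal ((k p.1 p.2) ^ 2)
                  ∂((volume : Measure (ℝ × ℝ)).restrict (G ×ˢ G)) :=
            ofReal_integral_eq_lintegral_ofReal hk2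
              (Filter.Eventually.of_forall fun p => sq_nonneg _)
          have h2 : ((volume : Measure (ℝ × ℝ)).restrict (G ×ˢ G)) = ν.prod ν := by
            rw [Measure.volume_eq_prod, ← Measure.prod_restrict]
          rw [h1, h2, lintegral_prod (fun p : ℝ × ℝ => ENNReal.ofReal ((k p.1 p.2) ^ 2))
            ((hk.pow_const 2).ennreal_ofReal.aemeasurable)]
          refine (lintegral_congr fun a => lintegral_congr fun b => ?_).symm
          rw [hFdef]
          rw [← ENNReal.ofReal_pow (abs_nonneg _), sq_abs]
        have hHl' : Hl = ENNReal.ofReal (Real.sqrt Q) := by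
          rw [hHl, hHsq, Real.sqrt_eq_rpow, ENNReal.ofReal_rpow_of_nonneg hQ0 (by norm_num)]
        rw [hDl', hHl', ← ENNReal.ofReal_add hD0 (Real.sqrt_nonneg _),
          ← ENNReal.ofReal_pow (by positivity), ENNReal.ofReal_mul (by positivity),
          ENNReal.ofReal_natCast]
end

section
/- Let $R: (0,\sigma] \to \mathbb{R}^{2\times 2}$ take symmetric positive definite values with $\det R \equiv 1/4$, and suppose $H_1, H_2: (0,\sigma] \to \mathbb{C}^2$ are continuously differentiable solutions of $J H'(t) = z R(t) H(t)$ (with $J = \begin{pmatrix} 0 & -1 \\ 1 & 0 \end{pmatrix}$, $z \in \mathbb{C}$ fixed) satisfying $\lim_{t\to 0} H_1(t) = \lim_{t \to 0} H_2(t) = \mathfrak{u}_0$ for a fixed nonzero $\mathfrak{u}_0 \in \mathbb{R}^2$, and neither $H_1$ nor $H_2$ vanishes anywhere on $(0,\sigma]$. Then $H_1 = H_2$ on $(0,\sigma]$. -/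
open Set Filter

private lemma ode_comp (z : ℂ) (Rt : Matrix (Fin 2) (Fin 2) ℝ) (v w : Fin 2 → ℂ)
    (h : ((!![0, -1; 1, 0] : Matrix (Fin 2) (Fin 2) ℝ).map Complex.ofReal).mulVec w =
      z • (Rt.map Complex.ofReal).mulVec v) :
    w 0 = z * ((Rt 1 0 : ℂ) * v 0 + (Rt 1 1 : ℂ) * v 1) ∧
    w 1 = -(z * ((Rt 0 0 : ℂ) * v 0 + (Rt 0 1 : ℂ) * v 1)) := by
  have h0 := congrFun h 0
  have h1 := congrFun h 1
  simp [Matrix.mulVec, dotProduct, Fin.sum_univ_two, Matrix.map_apply] at h0 h1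
  constructor
  · linear_combination h1
  · linear_combination -h0

/-- Uniqueness of solutions of the canonical system `J H' = z R H` on
`(0, σ]` with boundary value `u₀` at `0⁺`: two nonvanishing continuously
differentiable solutions with the same boundary behavior coincide. -/
theorem canonical_system_unique (σ : ℝ) (hσ : 0 < σ) (z : ℂ)
    (R : ℝ → Matrix (Fin 2) (Fin 2) ℝ)
    (hRsymm : ∀ t ∈ Ioc 0 σ, (R t).IsSymm)
    (hRpos : ∀ t ∈ Ioc 0 σ, (R t).PosDef)
    (hRdet : ∀ t ∈ Ioc 0 σ, (R t).det = 1 / 4)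
    (J : Matrix (Fin 2) (Fin 2) ℝ) (hJ : J = !![0, -1; 1, 0])
    (u₀ : Fin 2 → ℝ) (hu₀ : u₀ ≠ 0)
    (H₁ H₂ H₁' H₂' : ℝ → Fin 2 → ℂ)
    (hd₁ : ∀ t ∈ Ioc 0 σ, HasDerivAt H₁ (H₁' t) t)
    (hd₂ : ∀ t ∈ Ioc 0 σ, HasDerivAt H₂ (H₂' t) t)
    (hc₁ : ContinuousOn H₁' (Ioc 0 σ)) (hc₂ : ContinuousOn H₂' (Ioc 0 σ))
    (hODE₁ : ∀ t ∈ Ioc 0 σ,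
      (J.map Complex.ofReal).mulVec (H₁' t) =
        z • ((R t).map Complex.ofReal).mulVec (H₁ t))
    (hODE₂ : ∀ t ∈ Ioc 0 σ,
      (J.map Complex.ofReal).mulVec (H₂' t) =
        z • ((R t).map Complex.ofReal).mulVec (H₂ t))
    (hlim₁ : Tendsto H₁ (nhdsWithin 0 (Ioi 0)) (nhds fun i => (u₀ i : ℂ)))
    (hlim₂ : Tendsto H₂ (nhdsWithin 0 (Ioi 0)) (nhds fun i => (u₀ i : ℂ)))
    (hne₁ : ∀ t ∈ Ioc 0 σ, H₁ t ≠ 0)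
    (hne₂ : ∀ t ∈ Ioc 0 σ, H₂ t ≠ 0) :
    Set.EqOn H₁ H₂ (Ioc 0 σ) := by
  subst hJ
  -- scalar ODE equations
  have E₁ := fun t ht => ode_comp z (R t) (H₁ t) (H₁' t) (hODE₁ t ht)
  have E₂ := fun t ht => ode_comp z (R t) (H₂ t) (H₂' t) (hODE₂ t ht)
  have hsymm : ∀ t ∈ Ioc (0:ℝ) σ, R t 0 1 = R t 1 0 := fun t ht => (hRsymm t ht).apply 1 0
  -- the difference
  set D : ℝ → Fin 2 → ℂ := fun t => H₂ t - H₁ t with hDdef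
  set D' : ℝ → Fin 2 → ℂ := fun t => H₂' t - H₁' t with hD'def
  have hDa : ∀ t i, D t i = H₂ t i - H₁ t i := fun t i => rfl
  have hD'a : ∀ t i, D' t i = H₂' t i - H₁' t i := fun t i => rfl
  have hdD : ∀ t ∈ Ioc (0:ℝ) σ, ∀ i, HasDerivAt (fun s => D s i) (D' t i) t := by
    intro t ht i
    exact ((hasDerivAt_pi.mp (hd₂ t ht)) i).sub ((hasDerivAt_pi.mp (hd₁ t ht)) i)
  have hd₁i : ∀ t ∈ Ioc (0:ℝ) σ, ∀ i, HasDerivAt (fun s => H₁ s i) (H₁' t i) t :=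
    fun t ht i => (hasDerivAt_pi.mp (hd₁ t ht)) i
  -- scalar ODE for D
  have ED0 : ∀ t ∈ Ioc (0:ℝ) σ,
      D' t 0 = z * ((R t 1 0 : ℂ) * D t 0 + (R t 1 1 : ℂ) * D t 1) := by
    intro t ht
    have := (E₂ t ht).1; have := (E₁ t ht).1
    simp only [hD'a, hDa]
    linear_combination (E₂ t ht).1 - (E₁ t ht).1
  have ED1 : ∀ t ∈ Ioc (0:ℝ) σ,
      D' t 1 = -(z * ((R t 0 0 : ℂ) * D t 0 + (R t 0 1 : ℂ) * D t 1)) := by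
    intro t ht
    simp only [hD'a, hDa]
    linear_combination (E₂ t ht).2 - (E₁ t ht).2
  -- limits of components
  have hlimD : ∀ i, Tendsto (fun s => D s i) (nhdsWithin 0 (Ioi 0)) (nhds 0) := by
    intro i
    have h2 := (tendsto_pi_nhds.mp hlim₂) i
    have h1 := (tendsto_pi_nhds.mp hlim₁) i
    simpa [hDdef] using h2.sub h1
  have hlim₁i : ∀ i, Tendsto (fun s => H₁ s i) (nhdsWithin 0 (Ioi 0)) (nhds (u₀ i : ℂ)) :=
    fun i => (tendsto_pi_nhds.mp hlim₁) i
  have hIocmem : Ioc (0:ℝ) σ ∈ nhdsWithin (0:ℝ) (Ioi 0) :=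
    Ioc_mem_nhdsGT_of_mem ⟨le_rfl, hσ⟩
  have hconv : Convex ℝ (Ioc (0:ℝ) σ) := convex_Ioc 0 σ
  have hud : UniqueDiffOn ℝ (Ioc (0:ℝ) σ) := uniqueDiffOn_Ioc 0 σ
  -- generic constancy + zero-limit argument for a scalar function
  have key : ∀ f : ℝ → ℂ, (∀ t ∈ Ioc (0:ℝ) σ, HasDerivWithinAt f 0 (Ioc 0 σ) t) →
      Tendsto f (nhdsWithin 0 (Ioi 0)) (nhds 0) → ∀ t ∈ Ioc (0:ℝ) σ, f t = 0 := by
    intro f hf hlim t ht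
    have hdiff : DifferentiableOn ℝ f (Ioc 0 σ) := fun s hs => (hf s hs).differentiableWithinAt
    have hconst : ∀ s ∈ Ioc (0:ℝ) σ, f s = f t := by
      intro s hs
      apply hconv.is_const_of_fderivWithin_eq_zero hdiff _ hs ht
      intro x hx
      have := (hf x hx).hasFDerivWithinAt.fderivWithin (hud x hx)
      rw [this]; ext y; simp
    have h1 : Tendsto f (nhdsWithin 0 (Ioi 0)) (nhds (f t)) := by
      refine Tendsto.congr' ?_ tendsto_const_nhds
      filter_upwards [hIocmem] with s hs
      exact (hconst s hs).symm
    exact tendsto_nhds_unique h1 hlim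
  -- the Wronskian w = D₁ H₀ - D₀ H₁ vanishes
  set w : ℝ → ℂ := fun s => D s 1 * H₁ s 0 - D s 0 * H₁ s 1 with hwdef
  have hw0 : ∀ t ∈ Ioc (0:ℝ) σ, w t = 0 := by
    apply key
    · intro t ht
      have hw : HasDerivAt w
          ((D' t 1 * H₁ t 0 + D t 1 * H₁' t 0) - (D' t 0 * H₁ t 1 + D t 0 * H₁' t 1)) t := by
        exact ((hdD t ht 1).mul (hd₁i t ht 0)).sub ((hdD t ht 0).mul (hd₁i t ht 1))
      have hz : (D' t 1 * H₁ t 0 + D t 1 * H₁' t 0) - (D' t 0 * H₁ t 1 + D t 0 * H₁' t 1) = 0 := by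
        rw [ED0 t ht, ED1 t ht, (E₁ t ht).1, (E₁ t ht).2, hsymm t ht]
        ring
      rw [hz] at hw
      exact hw.hasDerivWithinAt
    · have : Tendsto w (nhdsWithin 0 (Ioi 0))
          (nhds ((0 : ℂ) * (u₀ 0 : ℂ) - 0 * (u₀ 1 : ℂ))) :=
        ((hlimD 1).mul (hlim₁i 0)).sub ((hlimD 0).mul (hlim₁i 1))
      simpa using this
  -- norm-squared of H₁ as a complex scalar
  set n : ℝ → ℂ := fun s => starRingEnd ℂ (H₁ s 0) * H₁ s 0 + starRingEnd ℂ (H₁ s 1) * H₁ s 1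
    with hndef
  have hnpos : ∀ t ∈ Ioc (0:ℝ) σ, n t ≠ 0 := by
    intro t ht hn
    apply hne₁ t ht
    have : ((Complex.normSq (H₁ t 0) + Complex.normSq (H₁ t 1) : ℝ) : ℂ) = 0 := by
      rw [← hn]; simp [hndef, Complex.normSq_eq_conj_mul_self]
    have h2 : Complex.normSq (H₁ t 0) + Complex.normSq (H₁ t 1) = 0 := by exact_mod_cast this
    have h3 : Complex.normSq (H₁ t 0) = 0 ∧ Complex.normSq (H₁ t 1) = 0 := by
      constructor <;> nlinarith [Complex.normSq_nonneg (H₁ t 0), Complex.normSq_nonneg (H₁ t 1)]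
    funext i
    fin_cases i
    · exact Complex.normSq_eq_zero.mp h3.1
    · exact Complex.normSq_eq_zero.mp h3.2
  set u : ℝ → ℂ := fun s => starRingEnd ℂ (H₁ s 0) * D s 0 + starRingEnd ℂ (H₁ s 1) * D s 1
    with hudef
  set c : ℝ → ℂ := fun s => u s / n s with hcdef
  -- pointwise: D = c • H₁
  have hpar : ∀ t ∈ Ioc (0:ℝ) σ, ∀ i, D t i = c t * H₁ t i := by
    intro t ht i
    have hw := hw0 t ht
    simp only [hwdef] at hw
    have hn := hnpos t ht
    fin_cases i
    · show D t 0 = c t * H₁ t 0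
      simp only [hcdef, hudef, hndef, div_mul_eq_mul_div]
      rw [eq_comm, div_eq_iff hn]
      linear_combination (starRingEnd ℂ (H₁ t 1)) * hw
    · show D t 1 = c t * H₁ t 1
      simp only [hcdef, hudef, hndef, div_mul_eq_mul_div]
      rw [eq_comm, div_eq_iff hn]
      linear_combination -(starRingEnd ℂ (H₁ t 0)) * hw
  -- c has derivative zero within Ioc
  have hc0 : ∀ t ∈ Ioc (0:ℝ) σ, c t = 0 := by
    apply key
    · intro t ht
      have hconj0 : HasDerivAt (fun s => starRingEnd ℂ (H₁ s 0)) (starRingEnd ℂ (H₁' t 0)) t :=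
        (hd₁i t ht 0).star
      have hconj1 : HasDerivAt (fun s => starRingEnd ℂ (H₁ s 1)) (starRingEnd ℂ (H₁' t 1)) t :=
        (hd₁i t ht 1).star
      have hu' : HasDerivAt u
          ((starRingEnd ℂ (H₁' t 0) * D t 0 + starRingEnd ℂ (H₁ t 0) * D' t 0) +
           (starRingEnd ℂ (H₁' t 1) * D t 1 + starRingEnd ℂ (H₁ t 1) * D' t 1)) t :=
        (hconj0.mul (hdD t ht 0)).add (hconj1.mul (hdD t ht 1))
      have hn' : HasDerivAt n
          ((starRingEnd ℂ (H₁' t 0) * H₁ t 0 + starRingEnd ℂ (H₁ t 0) * H₁' t 0) +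
           (starRingEnd ℂ (H₁' t 1) * H₁ t 1 + starRingEnd ℂ (H₁ t 1) * H₁' t 1)) t :=
        (hconj0.mul (hd₁i t ht 0)).add (hconj1.mul (hd₁i t ht 1))
      set cv : ℂ :=
        (((starRingEnd ℂ (H₁' t 0) * D t 0 + starRingEnd ℂ (H₁ t 0) * D' t 0) +
           (starRingEnd ℂ (H₁' t 1) * D t 1 + starRingEnd ℂ (H₁ t 1) * D' t 1)) * n t -
          u t * ((starRingEnd ℂ (H₁' t 0) * H₁ t 0 + starRingEnd ℂ (H₁ t 0) * H₁' t 0) +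
           (starRingEnd ℂ (H₁' t 1) * H₁ t 1 + starRingEnd ℂ (H₁ t 1) * H₁' t 1))) / n t ^ 2
        with hcvdef
      have hc' : HasDerivAt c cv t := hu'.div hn' (hnpos t ht)
      -- two expressions for the within-derivative of D · i
      have hDi : ∀ i : Fin 2, D' t i = cv * H₁ t i + c t * H₁' t i := by
        intro i
        have hg : HasDerivAt (fun s => c s * H₁ s i) (cv * H₁ t i + c t * H₁' t i) t :=
          hc'.mul (hd₁i t ht i)
        have h1 : HasDerivWithinAt (fun s => D s i) (cv * H₁ t i + c t * H₁' t i)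
            (Ioc 0 σ) t :=
          hg.hasDerivWithinAt.congr (fun s hs => hpar s hs i) (hpar t ht i)
        have h2 : HasDerivWithinAt (fun s => D s i) (D' t i) (Ioc 0 σ) t :=
          (hdD t ht i).hasDerivWithinAt
        rw [← h1.derivWithin (hud t ht), ← h2.derivWithin (hud t ht)]
      -- ODE gives D' = c • H₁'
      have hODEi0 : D' t 0 = c t * H₁' t 0 := by
        linear_combination (ED0 t ht) - c t * (E₁ t ht).1 + z * (R t 1 0 : ℂ) * (hpar t ht 0) +
          z * (R t 1 1 : ℂ) * (hpar t ht 1)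
      have hODEi1 : D' t 1 = c t * H₁' t 1 := by
        linear_combination (ED1 t ht) - c t * (E₁ t ht).2 - z * (R t 0 0 : ℂ) * (hpar t ht 0) -
          z * (R t 0 1 : ℂ) * (hpar t ht 1)
      have hcv0 : ∀ i : Fin 2, cv * H₁ t i = 0 := by
        intro i
        fin_cases i
        · show cv * H₁ t 0 = 0
          linear_combination hODEi0 - (hDi 0)
        · show cv * H₁ t 1 = 0
          linear_combination hODEi1 - (hDi 1)
      have hcv : cv = 0 := by
        by_contra hcv
        apply hne₁ t ht
        funext i
        have := hcv0 i
        rcases mul_eq_zero.mp this with h | h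
        · exact absurd h hcv
        · exact h
      rw [hcv] at hc'
      exact hc'.hasDerivWithinAt
    · -- limit of c at 0⁺ is 0
      have hul : Tendsto u (nhdsWithin 0 (Ioi 0))
          (nhds (starRingEnd ℂ (u₀ 0 : ℂ) * 0 + starRingEnd ℂ (u₀ 1 : ℂ) * 0)) := by
        have t0 : Tendsto (fun s => starRingEnd ℂ (H₁ s 0)) (nhdsWithin 0 (Ioi 0))
            (nhds (starRingEnd ℂ (u₀ 0 : ℂ))) := (Complex.continuous_conj.tendsto _).comp (hlim₁i 0)
        have t1 : Tendsto (fun s => starRingEnd ℂ (H₁ s 1)) (nhdsWithin 0 (Ioi 0))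
            (nhds (starRingEnd ℂ (u₀ 1 : ℂ))) := (Complex.continuous_conj.tendsto _).comp (hlim₁i 1)
        exact (t0.mul (hlimD 0)).add (t1.mul (hlimD 1))
      have hnl : Tendsto n (nhdsWithin 0 (Ioi 0))
          (nhds (starRingEnd ℂ (u₀ 0 : ℂ) * (u₀ 0 : ℂ) + starRingEnd ℂ (u₀ 1 : ℂ) * (u₀ 1 : ℂ))) := by
        have t0 : Tendsto (fun s => starRingEnd ℂ (H₁ s 0)) (nhdsWithin 0 (Ioi 0))
            (nhds (starRingEnd ℂ (u₀ 0 : ℂ))) := (Complex.continuous_conj.tendsto _).comp (hlim₁i 0)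
        have t1 : Tendsto (fun s => starRingEnd ℂ (H₁ s 1)) (nhdsWithin 0 (Ioi 0))
            (nhds (starRingEnd ℂ (u₀ 1 : ℂ))) := (Complex.continuous_conj.tendsto _).comp (hlim₁i 1)
        exact (t0.mul (hlim₁i 0)).add (t1.mul (hlim₁i 1))
      have hnl0 : starRingEnd ℂ (u₀ 0 : ℂ) * (u₀ 0 : ℂ) + starRingEnd ℂ (u₀ 1 : ℂ) * (u₀ 1 : ℂ) ≠ 0 := by
        simp only [Complex.conj_ofReal]
        intro h
        apply hu₀
        have : ((u₀ 0 * u₀ 0 + u₀ 1 * u₀ 1 : ℝ) : ℂ) = 0 := by push_cast; linear_combination h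
        have h2 : u₀ 0 * u₀ 0 + u₀ 1 * u₀ 1 = 0 := by exact_mod_cast this
        have h30 : u₀ 0 = 0 := by nlinarith [sq_nonneg (u₀ 0), sq_nonneg (u₀ 1)]
        have h31 : u₀ 1 = 0 := by nlinarith [sq_nonneg (u₀ 0), sq_nonneg (u₀ 1)]
        funext i; fin_cases i
        · exact h30
        · exact h31
      have := hul.div hnl hnl0
      simp at this; exact this
  -- conclude
  intro t ht
  funext i
  have hp := hpar t ht i
  rw [hc0 t ht, zero_mul] at hp
  have h : H₂ t i - H₁ t i = 0 := hp
  exact (sub_eq_zero.mp h).symm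
end
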